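/- arXiv:2311.14610 — 5 statements merged into one kernel-verified Lean document; each statement's English description precedes it below -/
import Mathlib

section
/- Let 𝓗 be a complex Hilbert space, M a von Neumann algebra acting on 𝓗, and Ω ∈ 𝓗. Let H be the closure of the real-linear span of {AΩ : A ∈ M, A = A*}. Then H is a standard subspace of 𝓗 if and only if Ω is cyclic for M (i.e. {AΩ : A ∈ M} is dense in 𝓗) and separating for M (i.e. for A ∈ M, AΩ = 0 implies A = 0). -/
/-- A standard subspace of a complex Hilbert space `𝓗`: a closed real-linear subspace `H`
such that `H + iH` is dense and `H ∩ iH = {0}`. -/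
def IsStandardSubspace {𝓗 : Type*} [NormedAddCommGroup 𝓗] [InnerProductSpace ℂ 𝓗]
    [CompleteSpace 𝓗] (H : Submodule ℝ 𝓗) : Prop :=
  IsClosed (H : Set 𝓗) ∧
    Dense {x : 𝓗 | ∃ h₁ ∈ H, ∃ h₂ ∈ H, x = h₁ + Complex.I • h₂} ∧
    ∀ x ∈ H, (∃ h ∈ H, x = Complex.I • h) → x = 0

section Aux

open ContinuousLinearMap Complex


variable {𝓗 : Type*} [NormedAddCommGroup 𝓗] [InnerProductSpace ℂ 𝓗] [CompleteSpace 𝓗]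

/-- The orbit of a vector under a von Neumann algebra, as a complex submodule. -/
def vnOrbit (M : VonNeumannAlgebra 𝓗) (Ω : 𝓗) : Submodule ℂ 𝓗 where
  carrier := {x : 𝓗 | ∃ A ∈ M, x = A Ω}
  add_mem' := by
    rintro _ _ ⟨A, hA, rfl⟩ ⟨B, hB, rfl⟩
    exact ⟨A + B, add_mem hA hB, by simp⟩
  zero_mem' := ⟨0, zero_mem M.toStarSubalgebra, by simp⟩
  smul_mem' := by
    rintro c _ ⟨A, hA, rfl⟩
    exact ⟨c • A, M.toStarSubalgebra.smul_mem hA c, by simp⟩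

lemma vnOrbit_mem {M : VonNeumannAlgebra 𝓗} {Ω x : 𝓗} :
    x ∈ vnOrbit M Ω ↔ ∃ A ∈ M, x = A Ω := Iff.rfl

/-- Decomposition into self-adjoint parts. -/
lemma selfAdjoint_decomp (M : VonNeumannAlgebra 𝓗) {A : 𝓗 →L[ℂ] 𝓗} (hA : A ∈ M) :
    ∃ B ∈ M, ∃ C ∈ M, IsSelfAdjoint B ∧ IsSelfAdjoint C ∧ A = B + Complex.I • C := by
  refine ⟨(2 : ℂ)⁻¹ • (A + star A), M.toStarSubalgebra.smul_mem (add_mem hA (star_mem hA)) _,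
    (-(Complex.I / 2)) • (A - star A), M.toStarSubalgebra.smul_mem (sub_mem hA (star_mem hA)) _,
    ?_, ?_, ?_⟩
  · rw [IsSelfAdjoint, star_smul, star_add, star_star]
    simp [add_comm]
  · rw [IsSelfAdjoint, star_smul, star_sub, star_star, Complex.star_def, map_neg, map_div₀,
      Complex.conj_I, map_ofNat]
    module
  · rw [smul_smul]
    rw [show Complex.I * -(Complex.I / 2) = 2⁻¹ by
      rw [mul_neg, show Complex.I * (Complex.I / 2) = Complex.I * Complex.I / 2 from
        (mul_div_assoc _ _ _).symm, Complex.I_mul_I]; norm_num]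
    module

local notation "⟪" x ", " y "⟫" => @inner ℂ _ _ x y

/-- The orthogonal projection onto a closed subspace invariant under a von Neumann algebra `N`
lies in the commutant of `N`. -/
lemma proj_mem_commutant (N : VonNeumannAlgebra 𝓗) (U : Submodule ℂ 𝓗)
    (hU : IsClosed (U : Set 𝓗)) (hinv : ∀ A ∈ N, ∀ x ∈ U, A x ∈ U) :
    haveI : CompleteSpace U := hU.completeSpace_coe
    U.subtypeL ∘L U.orthogonalProjectionOnto ∈ N.commutant := by
  haveI : CompleteSpace U := hU.completeSpace_coe
  rw [VonNeumannAlgebra.mem_commutant_iff]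
  intro g hg
  ext x
  have h1 : (g : 𝓗 →L[ℂ] 𝓗) ((U.orthogonalProjectionOnto x : 𝓗)) ∈ U :=
    hinv g hg _ (U.orthogonalProjectionOnto x).2
  have h2 : g x - g (U.orthogonalProjectionOnto x : 𝓗) ∈ Uᗮ := by
    rw [Submodule.mem_orthogonal]
    intro u hu
    rw [← map_sub]
    rw [← ContinuousLinearMap.adjoint_inner_left]
    have hadj : ContinuousLinearMap.adjoint g u ∈ U := by
      refine hinv (star g) (star_mem hg) u hu
    exact (Submodule.mem_orthogonal U _).mp (Submodule.sub_starProjection_mem_orthogonal (K := U) x) _ hadj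
  have := Submodule.eq_starProjection_of_mem_orthogonal' (u := g x) h1 h2 (by abel)
  simp only [ContinuousLinearMap.mul_apply, ContinuousLinearMap.comp_apply,
    Submodule.subtypeL_apply]
  exact this.symm

/-- If `Ω` is separating for `M`, then the commutant orbit `M'Ω` is dense. -/
lemma commutant_orbit_dense (M : VonNeumannAlgebra 𝓗) (Ω : 𝓗)
    (hsep : ∀ A ∈ M, A Ω = 0 → A = 0) :
    Dense (vnOrbit M.commutant Ω : Set 𝓗) := by
  set U : Submodule ℂ 𝓗 := (vnOrbit M.commutant Ω).topologicalClosure with hUdef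
  have hU : IsClosed (U : Set 𝓗) := Submodule.isClosed_topologicalClosure _
  haveI : CompleteSpace U := hU.completeSpace_coe
  have hinv : ∀ A ∈ M.commutant, ∀ x ∈ U, A x ∈ U := by
    intro A hA x hx
    have hle : vnOrbit M.commutant Ω ≤ U.comap (A : 𝓗 →ₗ[ℂ] 𝓗) := by
      rintro _ ⟨B, hB, rfl⟩
      exact Submodule.le_topologicalClosure _ ⟨A * B, mul_mem hA hB, rfl⟩
    have hcl : IsClosed ((U.comap (A : 𝓗 →ₗ[ℂ] 𝓗) : Submodule ℂ 𝓗) : Set 𝓗) :=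
      hU.preimage A.continuous
    exact Submodule.topologicalClosure_minimal _ hle hcl hx
  have hP := proj_mem_commutant M.commutant U hU hinv
  rw [VonNeumannAlgebra.commutant_commutant] at hP
  set P := U.subtypeL ∘L U.orthogonalProjectionOnto with hPdef
  have hΩU : Ω ∈ U := Submodule.le_topologicalClosure _ ⟨1, one_mem _, by simp⟩
  have hPΩ : P Ω = Ω := by
    exact (Submodule.starProjection_eq_self_iff (K := U)).mpr hΩU
  have h1P : (1 - P) ∈ M := sub_mem (one_mem M.toStarSubalgebra) hP
  have h1PΩ : (1 - P) Ω = 0 := by simp [hPΩ]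
  have hP1 : (1 : 𝓗 →L[ℂ] 𝓗) - P = 0 := hsep _ h1P h1PΩ
  have hUtop : ∀ y : 𝓗, y ∈ U := by
    intro y
    have : P y = y := by
      have h := congrFun (congrArg DFunLike.coe hP1) y
      simp only [ContinuousLinearMap.sub_apply, ContinuousLinearMap.one_apply,
        ContinuousLinearMap.zero_apply] at h
      exact (sub_eq_zero.mp h).symm
    rw [← this]
    exact (U.orthogonalProjectionOnto y).2
  rw [dense_iff_closure_eq]
  apply Set.eq_univ_of_univ_subset
  intro y _
  exact hUtop y

lemma inner_commutant_real (M : VonNeumannAlgebra 𝓗) (Ω : 𝓗) {B : 𝓗 →L[ℂ] 𝓗}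
    (hB : B ∈ M.commutant) (hBsa : IsSelfAdjoint B) {x : 𝓗}
    (hx : x ∈ (Submodule.span ℝ
      {x : 𝓗 | ∃ A ∈ M, IsSelfAdjoint A ∧ x = A Ω}).topologicalClosure) :
    (⟪B Ω, x⟫).im = 0 := by
  set f : 𝓗 →L[ℝ] ℝ := Complex.imCLM.comp ((innerSL ℂ (B Ω)).restrictScalars ℝ) with hf
  have hS : {x : 𝓗 | ∃ A ∈ M, IsSelfAdjoint A ∧ x = A Ω} ⊆ (LinearMap.ker (f : 𝓗 →ₗ[ℝ] ℝ) : Set 𝓗) := by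
    rintro _ ⟨A, hA, hAsa, rfl⟩
    have hBadj : ContinuousLinearMap.adjoint B = B := by
      rw [← ContinuousLinearMap.star_eq_adjoint]; exact hBsa
    have hAadj : ContinuousLinearMap.adjoint A = A := by
      rw [← ContinuousLinearMap.star_eq_adjoint]; exact hAsa
    have hcomm : A (B Ω) = B (A Ω) := by
      have := VonNeumannAlgebra.mem_commutant_iff.mp hB A hA
      calc A (B Ω) = (A * B) Ω := rfl
        _ = (B * A) Ω := by rw [this]
        _ = B (A Ω) := rfl
    have key : ⟪B Ω, A Ω⟫ = (starRingEnd ℂ) ⟪B Ω, A Ω⟫ := by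
      calc ⟪B Ω, A Ω⟫ = ⟪ContinuousLinearMap.adjoint B Ω, A Ω⟫ := by rw [hBadj]
        _ = ⟪Ω, B (A Ω)⟫ := ContinuousLinearMap.adjoint_inner_left B (A Ω) Ω
        _ = ⟪Ω, A (B Ω)⟫ := by rw [hcomm]
        _ = ⟪ContinuousLinearMap.adjoint A Ω, B Ω⟫ :=
            (ContinuousLinearMap.adjoint_inner_left A (B Ω) Ω).symm
        _ = ⟪A Ω, B Ω⟫ := by rw [hAadj]
        _ = (starRingEnd ℂ) ⟪B Ω, A Ω⟫ := (inner_conj_symm _ _).symm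
    have him : (⟪B Ω, A Ω⟫).im = 0 := Complex.conj_eq_iff_im.mp key.symm
    simpa [hf, LinearMap.mem_ker] using him
  have hle : Submodule.span ℝ {x : 𝓗 | ∃ A ∈ M, IsSelfAdjoint A ∧ x = A Ω} ≤
      LinearMap.ker (f : 𝓗 →ₗ[ℝ] ℝ) := Submodule.span_le.mpr hS
  have := Submodule.topologicalClosure_minimal _ hle (ContinuousLinearMap.isClosed_ker f) hx
  simpa [hf, LinearMap.mem_ker] using this

end Aux

local notation "⟪" x ", " y "⟫" => @inner ℂ _ _ x y

/-- for a von Neumann algebra `M` on `𝓗` and a vector `Ω`, the closure of the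
real span of `{AΩ : A ∈ M, A = A*}` is a standard subspace iff `Ω` is cyclic and separating
for `M`. -/
theorem isStandardSubspace_selfAdjoint_orbit_iff_cyclic_separating
    {𝓗 : Type*} [NormedAddCommGroup 𝓗] [InnerProductSpace ℂ 𝓗] [CompleteSpace 𝓗]
    (M : VonNeumannAlgebra 𝓗) (Ω : 𝓗) :
    IsStandardSubspace
      ((Submodule.span ℝ {x : 𝓗 | ∃ A ∈ M, IsSelfAdjoint A ∧ x = A Ω}).topologicalClosure) ↔
    (Dense {x : 𝓗 | ∃ A ∈ M, x = A Ω} ∧ ∀ A ∈ M, A Ω = 0 → A = 0) := by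
  set S := {x : 𝓗 | ∃ A ∈ M, IsSelfAdjoint A ∧ x = A Ω} with hSdef
  set H := (Submodule.span ℝ S).topologicalClosure with hHdef
  have hgen : ∀ {A : 𝓗 →L[ℂ] 𝓗}, A ∈ M → IsSelfAdjoint A → A Ω ∈ H := fun hA hAsa =>
    Submodule.le_topologicalClosure _ (Submodule.subset_span ⟨_, hA, hAsa, rfl⟩)
  constructor
  · rintro ⟨hclosed, hdense, hint⟩
    set T := vnOrbit M Ω with hTdef
    have hHsub : (H : Set 𝓗) ⊆ ((T.topologicalClosure : Submodule ℂ 𝓗) : Set 𝓗) := by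
      intro x hx
      have hle : Submodule.span ℝ S ≤ Submodule.restrictScalars ℝ T.topologicalClosure := by
        rw [Submodule.span_le]
        rintro _ ⟨A, hA, _, rfl⟩
        exact Submodule.le_topologicalClosure _ ⟨A, hA, rfl⟩
      have hcl : IsClosed ((Submodule.restrictScalars ℝ T.topologicalClosure : Submodule ℝ 𝓗) :
          Set 𝓗) := Submodule.isClosed_topologicalClosure _
      exact Submodule.topologicalClosure_minimal _ hle hcl hx
    have hcyc : Dense {x : 𝓗 | ∃ A ∈ M, x = A Ω} := by
      have hDsub : {x : 𝓗 | ∃ h₁ ∈ H, ∃ h₂ ∈ H, x = h₁ + Complex.I • h₂} ⊆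
          ((T.topologicalClosure : Submodule ℂ 𝓗) : Set 𝓗) := by
        rintro _ ⟨h₁, hh₁, h₂, hh₂, rfl⟩
        exact add_mem (hHsub hh₁) (Submodule.smul_mem _ _ (hHsub hh₂))
      rw [dense_iff_closure_eq]
      apply Set.eq_univ_of_univ_subset
      calc (Set.univ : Set 𝓗)
          = closure {x : 𝓗 | ∃ h₁ ∈ H, ∃ h₂ ∈ H, x = h₁ + Complex.I • h₂} :=
            hdense.closure_eq.symm
        _ ⊆ closure ((T.topologicalClosure : Submodule ℂ 𝓗) : Set 𝓗) := closure_mono hDsub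
        _ = ((T.topologicalClosure : Submodule ℂ 𝓗) : Set 𝓗) :=
            (Submodule.isClosed_topologicalClosure _).closure_eq
        _ = closure (T : Set 𝓗) := Submodule.topologicalClosure_coe _
        _ = closure {x : 𝓗 | ∃ A ∈ M, x = A Ω} := rfl
    refine ⟨hcyc, ?_⟩
    -- separating
    have hsa_zero : ∀ {D : 𝓗 →L[ℂ] 𝓗}, D ∈ M → IsSelfAdjoint D → D Ω = 0 → D = 0 := by
      intro D hD hDsa hDΩ
      have horbit : ∀ y ∈ {x : 𝓗 | ∃ A ∈ M, x = A Ω}, D y = 0 := by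
        have hsa : ∀ {E : 𝓗 →L[ℂ] 𝓗}, E ∈ M → IsSelfAdjoint E → D (E Ω) = 0 := by
          intro E hE hEsa
          have hx1 : D (E Ω) ∈ H := by
            have hmem : D * E + E * D ∈ M := add_mem (mul_mem hD hE) (mul_mem hE hD)
            have hsa1 : IsSelfAdjoint (D * E + E * D) := by
              rw [IsSelfAdjoint, star_add, star_mul, star_mul, hDsa.star_eq, hEsa.star_eq,
                add_comm]
            have : (D * E + E * D) Ω = D (E Ω) := by
              simp [ContinuousLinearMap.mul_apply, hDΩ]
            rw [← this]; exact hgen hmem hsa1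
          have hx2 : Complex.I • D (E Ω) ∈ H := by
            have hmem : Complex.I • (D * E - E * D) ∈ M :=
              M.toStarSubalgebra.smul_mem (sub_mem (mul_mem hD hE) (mul_mem hE hD)) _
            have hsa2 : IsSelfAdjoint (Complex.I • (D * E - E * D)) := by
              rw [IsSelfAdjoint, star_smul, star_sub, star_mul, star_mul, hDsa.star_eq,
                hEsa.star_eq, Complex.star_def, Complex.conj_I, neg_smul, smul_sub, smul_sub]
              module
            have : (Complex.I • (D * E - E * D)) Ω = Complex.I • D (E Ω) := by
              simp [ContinuousLinearMap.mul_apply, hDΩ]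
            rw [← this]; exact hgen hmem hsa2
          have := hint _ hx2 ⟨D (E Ω), hx1, rfl⟩
          simpa [Complex.I_ne_zero] using this
        rintro _ ⟨A, hA, rfl⟩
        obtain ⟨B, hB, C, hC, hBsa, hCsa, rfl⟩ := selfAdjoint_decomp M hA
        simp [ContinuousLinearMap.add_apply, hsa hB hBsa, hsa hC hCsa]
      ext y
      have hcl : closure {x : 𝓗 | ∃ A ∈ M, x = A Ω} ⊆ (LinearMap.ker (D : 𝓗 →ₗ[ℂ] 𝓗) : Set 𝓗) :=
        closure_minimal horbit (ContinuousLinearMap.isClosed_ker D)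
      have : y ∈ closure {x : 𝓗 | ∃ A ∈ M, x = A Ω} := by rw [hcyc.closure_eq]; trivial
      simpa using hcl this
    intro A hA hAΩ
    obtain ⟨B, hB, C, hC, hBsa, hCsa, rfl⟩ := selfAdjoint_decomp M hA
    have heq : B Ω + Complex.I • C Ω = 0 := by simpa using hAΩ
    have hBΩ : B Ω = 0 := by
      refine hint _ (hgen hB hBsa) ⟨-(C Ω), neg_mem (hgen hC hCsa), ?_⟩
      rw [smul_neg]
      exact eq_neg_iff_add_eq_zero.mpr heq
    have hCΩ : C Ω = 0 := by
      have : Complex.I • C Ω = 0 := by rw [hBΩ, zero_add] at heq; exact heq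
      simpa [Complex.I_ne_zero] using this
    rw [hsa_zero hB hBsa hBΩ, hsa_zero hC hCsa hCΩ, smul_zero, add_zero]
  · rintro ⟨hcyc, hsep⟩
    refine ⟨Submodule.isClosed_topologicalClosure _, ?_, ?_⟩
    · refine hcyc.mono ?_
      rintro _ ⟨A, hA, rfl⟩
      obtain ⟨B, hB, C, hC, hBsa, hCsa, rfl⟩ := selfAdjoint_decomp M hA
      exact ⟨B Ω, hgen hB hBsa, C Ω, hgen hC hCsa, by simp⟩
    · rintro x hx ⟨h, hh, rfl⟩
      have horth : ∀ {B : 𝓗 →L[ℂ] 𝓗}, B ∈ M.commutant → IsSelfAdjoint B →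
          ⟪B Ω, Complex.I • h⟫ = 0 := by
        intro B hB hBsa
        have him : (⟪B Ω, h⟫).im = 0 := inner_commutant_real M Ω hB hBsa hh
        have himx : (⟪B Ω, Complex.I • h⟫).im = 0 := inner_commutant_real M Ω hB hBsa hx
        have hsm : ⟪B Ω, Complex.I • h⟫ = Complex.I * ⟪B Ω, h⟫ := inner_smul_right _ _ _
        have hre : (⟪B Ω, h⟫).re = 0 := by
          have := himx
          rw [hsm] at this
          simpa [Complex.mul_im] using this
        have hzero : ⟪B Ω, h⟫ = 0 := Complex.ext hre him
        rw [hsm, hzero, mul_zero]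
      have horth' : ∀ d ∈ {x : 𝓗 | ∃ A ∈ M.commutant, x = A Ω},
          ⟪d, Complex.I • h⟫ = 0 := by
        rintro _ ⟨A, hA, rfl⟩
        obtain ⟨B, hB, C, hC, hBsa, hCsa, rfl⟩ := selfAdjoint_decomp M.commutant hA
        rw [ContinuousLinearMap.add_apply, inner_add_left, ContinuousLinearMap.smul_apply,
          inner_smul_left, horth hB hBsa, horth hC hCsa, mul_zero, add_zero]
      have hdense' : Dense {x : 𝓗 | ∃ A ∈ M.commutant, x = A Ω} :=
        commutant_orbit_dense M Ω hsep
      have hker : closure {x : 𝓗 | ∃ A ∈ M.commutant, x = A Ω} ⊆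
          (LinearMap.ker ((innerSL ℂ (Complex.I • h)) : 𝓗 →ₗ[ℂ] ℂ) : Set 𝓗) := by
        refine closure_minimal ?_ (ContinuousLinearMap.isClosed_ker _)
        intro d hd
        exact inner_eq_zero_symm.mp (horth' d hd)
      have hself : ⟪Complex.I • h, Complex.I • h⟫ = 0 := by
        have : Complex.I • h ∈ closure {x : 𝓗 | ∃ A ∈ M.commutant, x = A Ω} := by
          rw [hdense'.closure_eq]; trivial
        exact hker this
      exact inner_self_eq_zero.mp hself
end

section
/- Let 𝓗 be a complex Hilbert space with a Hilbert basis (orthonormal basis) (e_n)_{n ∈ ι} for a nonempty index type ι. Then the closure H of the real-linear span of {e_n : n ∈ ι} is a standard subspace of 𝓗. -/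
/-- the closure of the real span of a Hilbert (orthonormal) basis of a complex
Hilbert space is a (maximally abelian) standard subspace. -/
theorem isStandardSubspace_closure_real_span_hilbertBasis
    {𝓗 : Type*} [NormedAddCommGroup 𝓗] [InnerProductSpace ℂ 𝓗] [CompleteSpace 𝓗]
    {ι : Type*} [Nonempty ι] (b : HilbertBasis ι ℂ 𝓗) :
    IsStandardSubspace
      ((Submodule.span ℝ (Set.range fun i : ι => b i)).topologicalClosure) := by
  classical
  set S : Submodule ℝ 𝓗 := Submodule.span ℝ (Set.range fun i : ι => b i) with hS
  set H : Submodule ℝ 𝓗 := S.topologicalClosure with hH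
  -- key: elements of H have real coefficients
  have key : ∀ x ∈ H, ∀ i : ι, (inner ℂ (b i) x : ℂ).im = 0 := by
    intro x hx i
    set L : 𝓗 →L[ℝ] ℝ :=
      Complex.imCLM.comp (((innerSL ℂ (b i))).restrictScalars ℝ) with hL
    have hker : H ≤ LinearMap.ker (L : 𝓗 →ₗ[ℝ] ℝ) := by
      apply Submodule.topologicalClosure_minimal
      · rw [hS, Submodule.span_le]
        rintro _ ⟨j, rfl⟩
        simp only [SetLike.mem_coe, LinearMap.mem_ker, ContinuousLinearMap.coe_coe, hL,
          ContinuousLinearMap.comp_apply, ContinuousLinearMap.coe_restrictScalars',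
          innerSL_apply_apply, Complex.imCLM_apply]
        rw [(orthonormal_iff_ite.mp b.orthonormal) i j]
        split <;> simp
      · exact ContinuousLinearMap.isClosed_ker L
    have := hker hx
    simpa [hL] using this
  refine ⟨Submodule.isClosed_topologicalClosure S, ?_, ?_⟩
  · -- density of H + iH
    have hsub : (Submodule.span ℂ (Set.range fun i : ι => b i) : Set 𝓗) ⊆
        {x : 𝓗 | ∃ h₁ ∈ H, ∃ h₂ ∈ H, x = h₁ + Complex.I • h₂} := by
      intro x hx
      induction hx using Submodule.span_induction with
      | mem x hxmem =>
          exact ⟨x, S.le_topologicalClosure (Submodule.subset_span hxmem), 0,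
            H.zero_mem, by simp⟩
      | zero => exact ⟨0, H.zero_mem, 0, H.zero_mem, by simp⟩
      | add x y hx hy ihx ihy =>
          obtain ⟨a, ha, c, hc, rfl⟩ := ihx
          obtain ⟨d, hd, e, he, rfl⟩ := ihy
          exact ⟨a + d, H.add_mem ha hd, c + e, H.add_mem hc he, by
            simp [smul_add]; abel⟩
      | smul r x hx ihx =>
          obtain ⟨a, ha, c, hc, rfl⟩ := ihx
          refine ⟨r.re • a - r.im • c, H.sub_mem (H.smul_mem _ ha) (H.smul_mem _ hc),
            r.im • a + r.re • c, H.add_mem (H.smul_mem _ ha) (H.smul_mem _ hc), ?_⟩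
          have hre : ∀ (s : ℝ) (v : 𝓗), s • v = (s : ℂ) • v := fun s v => by
            rw [Complex.coe_smul]
          rw [hre, hre, hre, hre]
          have : r • (a + Complex.I • c) =
              ((r.re : ℂ) + (r.im : ℂ) * Complex.I) • (a + Complex.I • c) := by
            rw [← Complex.re_add_im r]
            norm_num
          rw [this]
          match_scalars <;> simp [Complex.ext_iff]
    have hdense : Dense (Submodule.span ℂ (Set.range fun i : ι => b i) : Set 𝓗) := by
      have := b.dense_span
      rwa [← Submodule.dense_iff_topologicalClosure_eq_top] at this
    exact hdense.mono hsub
  · -- triviality of H ∩ iH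
    rintro x hx ⟨h, hh, rfl⟩
    have hzero : ∀ i : ι, (inner ℂ (b i) h : ℂ) = 0 := by
      intro i
      have h1 := key _ hx i
      have h2 := key _ hh i
      rw [inner_smul_right] at h1
      apply Complex.ext
      · simpa [Complex.mul_im] using h1
      · exact h2
    have : h = 0 := by
      have : b.repr h = 0 := by
        ext i
        simpa [HilbertBasis.repr_apply_apply] using hzero i
      simpa using congrArg b.repr.symm this
    simp [this]
end

section
/- Let ι be a nonempty finite type and T : Matrix (ι × ι) (ι × ι) ℂ a Hermitian matrix whose operator norm (as a linear operator on EuclideanSpace ℂ (ι × ι)) is at most 1/2. Then for every n ∈ ℕ, the twisted symmetrizer matrix P_{T,n} is positive definite; in particular T is a strict twist. -/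
open scoped ComplexOrder
/-- The operator `T_k` acting on the `(k-1, k)` coordinates (0-indexed) of `Fin n → ι` by the
matrix `T`, and as the identity on the remaining coordinates, for `1 ≤ k ≤ n - 1`. -/
def twistLeg {ι : Type*} [Fintype ι] [DecidableEq ι] (T : Matrix (ι × ι) (ι × ι) ℂ)
    (n k : ℕ) : Matrix (Fin n → ι) (Fin n → ι) ℂ :=
  Matrix.of fun g f =>
    if h : 1 ≤ k ∧ k < n then
      if ∀ j : Fin n, j ≠ (⟨k - 1, by omega⟩ : Fin n) → j ≠ (⟨k, h.2⟩ : Fin n) → g j = f j then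
        T (g ⟨k - 1, by omega⟩, g ⟨k, h.2⟩) (f ⟨k - 1, by omega⟩, f ⟨k, h.2⟩)
      else 0
    else 0

/-- The ampliation `E_n(P)` acting as the identity on the 0-th coordinate and as `P` on the
remaining `n` coordinates. -/
def ampMat {ι : Type*} [DecidableEq ι] (n : ℕ) (P : Matrix (Fin n → ι) (Fin n → ι) ℂ) :
    Matrix (Fin (n + 1) → ι) (Fin (n + 1) → ι) ℂ :=
  Matrix.of fun g f => if g 0 = f 0 then P (g ∘ Fin.succ) (f ∘ Fin.succ) else 0

/-- The twisted symmetrizers `P_{T,n}`, defined by the left recursion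
`P_{T,n+1} = E_n(P_{T,n}) * (1 + T_1 + T_1 T_2 + ⋯ + T_1 ⋯ T_n)`. -/
noncomputable def twistedSymmetrizer {ι : Type*} [Fintype ι] [DecidableEq ι]
    (T : Matrix (ι × ι) (ι × ι) ℂ) : (n : ℕ) → Matrix (Fin n → ι) (Fin n → ι) ℂ
  | 0 => 1
  | n + 1 =>
      ampMat n (twistedSymmetrizer T n) *
        ∑ k ∈ Finset.range (n + 1),
          ((List.range k).map (fun j => twistLeg T (n + 1) (j + 1))).prod

set_option linter.unusedSectionVars false

namespace TwistProof
open Matrix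

variable {ι : Type*} [Fintype ι] [DecidableEq ι]

/-- Reindexing equivalence realizing `ampMat` as a block diagonal matrix. -/
def eAmp (ι : Type*) (n : ℕ) : (Fin (n + 1) → ι) ≃ (Fin n → ι) × ι :=
  ((Fin.consEquiv fun _ : Fin (n + 1) => ι).symm).trans (Equiv.prodComm _ _)

lemma ampMat_eq (n : ℕ) (P : Matrix (Fin n → ι) (Fin n → ι) ℂ) :
    ampMat n P = (blockDiagonal fun _ : ι => P).submatrix (eAmp ι n) (eAmp ι n) := by
  ext g f
  simp only [ampMat, of_apply, submatrix_apply, blockDiagonal_apply, eAmp, Equiv.trans_apply,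
    Equiv.prodComm_apply, Fin.consEquiv, Equiv.coe_fn_symm_mk, Prod.swap_prod_mk]
  rfl

lemma ampMat_one (n : ℕ) : ampMat n (1 : Matrix (Fin n → ι) (Fin n → ι) ℂ) = 1 := by
  rw [ampMat_eq, show (fun _ : ι => (1 : Matrix (Fin n → ι) (Fin n → ι) ℂ)) = 1 from rfl,
    blockDiagonal_one, submatrix_one_equiv]

lemma ampMat_mul (n : ℕ) (P Q : Matrix (Fin n → ι) (Fin n → ι) ℂ) :
    ampMat n (P * Q) = ampMat n P * ampMat n Q := by
  rw [ampMat_eq, ampMat_eq, ampMat_eq, submatrix_mul_equiv, ← blockDiagonal_mul]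

lemma ampMat_conjTranspose (n : ℕ) (P : Matrix (Fin n → ι) (Fin n → ι) ℂ) :
    (ampMat n P)ᴴ = ampMat n Pᴴ := by
  rw [ampMat_eq, ampMat_eq, conjTranspose_submatrix, blockDiagonal_conjTranspose]

lemma ampMat_sum {α : Type*} (n : ℕ) (s : Finset α)
    (f : α → Matrix (Fin n → ι) (Fin n → ι) ℂ) :
    ampMat n (∑ a ∈ s, f a) = ∑ a ∈ s, ampMat n (f a) := by
  ext g h
  by_cases hc : g 0 = h 0
  · simp [ampMat, Matrix.sum_apply, hc]
  · simp [ampMat, Matrix.sum_apply, hc]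

lemma ampMat_listProd (n : ℕ) (l : List ℕ) (f : ℕ → Matrix (Fin n → ι) (Fin n → ι) ℂ) :
    ampMat n ((l.map f).prod) = (l.map fun j => ampMat n (f j)).prod := by
  induction l with
  | nil => simpa using ampMat_one n
  | cons a l ih => simp [ampMat_mul, ih]

lemma twistLeg_apply (T : Matrix (ι × ι) (ι × ι) ℂ) {n k : ℕ} (h1 : 1 ≤ k) (h2 : k < n)
    (g f : Fin n → ι) :
    twistLeg T n k g f =
      if ∀ j : Fin n, (j : ℕ) ≠ k - 1 → (j : ℕ) ≠ k → g j = f j then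
        T (g ⟨k - 1, by omega⟩, g ⟨k, h2⟩) (f ⟨k - 1, by omega⟩, f ⟨k, h2⟩)
      else 0 := by
  rw [twistLeg, of_apply, dif_pos ⟨h1, h2⟩]
  refine if_congr (forall_congr' fun j => ?_) rfl rfl
  simp [Ne, Fin.ext_iff]

lemma twistLeg_eq_zero (T : Matrix (ι × ι) (ι × ι) ℂ) {n k : ℕ} (h : ¬(1 ≤ k ∧ k < n)) :
    twistLeg T n k = 0 := by
  ext g f
  rw [twistLeg, of_apply, dif_neg h, Matrix.zero_apply]

lemma ampMat_zero (n : ℕ) : ampMat n (0 : Matrix (Fin n → ι) (Fin n → ι) ℂ) = 0 := by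
  ext g f
  simp [ampMat]

lemma ampMat_twistLeg (T : Matrix (ι × ι) (ι × ι) ℂ) {n k : ℕ} (h1 : 1 ≤ k) :
    ampMat n (twistLeg T n k) = twistLeg T (n + 1) (k + 1) := by
  by_cases h2 : k < n
  · ext g f
    rw [ampMat, of_apply, twistLeg_apply T (by omega : 1 ≤ k + 1) (by omega : k + 1 < n + 1) g f]
    have hs1 : Fin.succ (⟨k - 1, by omega⟩ : Fin n) = ⟨k, by omega⟩ := by
      ext
      simp [Fin.val_succ]
      omega
    have key : (∀ j : Fin (n + 1), (j : ℕ) ≠ k + 1 - 1 → (j : ℕ) ≠ k + 1 → g j = f j)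
        ↔ (g 0 = f 0 ∧ ∀ j : Fin n, (j : ℕ) ≠ k - 1 → (j : ℕ) ≠ k →
            (g ∘ Fin.succ) j = (f ∘ Fin.succ) j) := by
      constructor
      · intro H
        refine ⟨H 0 (by simp only [Fin.val_zero]; omega) (by simp only [Fin.val_zero]; omega),
          fun j hj1 hj2 => H j.succ ?_ ?_⟩
        · simp only [Fin.val_succ]; omega
        · simp only [Fin.val_succ]; omega
      · rintro ⟨h0, H⟩ j hj1 hj2
        induction j using Fin.cases with
        | zero => exact h0
        | succ i =>
          refine H i ?_ ?_
          · simp only [Fin.val_succ] at hj1; omega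
          · simp only [Fin.val_succ] at hj2; omega
    simp only [key, ite_and]
    by_cases h0 : g 0 = f 0
    · rw [if_pos h0, if_pos h0, twistLeg_apply T h1 h2]
      refine if_congr Iff.rfl ?_ rfl
      simp only [Function.comp_apply, hs1]
      rfl
    · rw [if_neg h0, if_neg h0]
  · rw [twistLeg_eq_zero T (by omega), twistLeg_eq_zero T (by omega), ampMat_zero]

lemma twistLeg_conjTranspose {T : Matrix (ι × ι) (ι × ι) ℂ} (hT : T.IsHermitian) (n k : ℕ) :
    (twistLeg T n k)ᴴ = twistLeg T n k := by
  by_cases h : 1 ≤ k ∧ k < n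
  · ext g f
    rw [conjTranspose_apply, twistLeg_apply T h.1 h.2 f g, twistLeg_apply T h.1 h.2 g f,
      apply_ite star, star_zero]
    have hcc : (∀ j : Fin n, (j : ℕ) ≠ k - 1 → (j : ℕ) ≠ k → f j = g j)
        ↔ (∀ j : Fin n, (j : ℕ) ≠ k - 1 → (j : ℕ) ≠ k → g j = f j) :=
      forall_congr' fun j => imp_congr Iff.rfl (imp_congr Iff.rfl eq_comm)
    simp only [hcc]
    refine if_congr Iff.rfl ?_ rfl
    calc star (T (f ⟨k - 1, by omega⟩, f ⟨k, h.2⟩) (g ⟨k - 1, by omega⟩, g ⟨k, h.2⟩))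
        = Tᴴ (g ⟨k - 1, by omega⟩, g ⟨k, h.2⟩) (f ⟨k - 1, by omega⟩, f ⟨k, h.2⟩) := rfl
      _ = T (g ⟨k - 1, by omega⟩, g ⟨k, h.2⟩) (f ⟨k - 1, by omega⟩, f ⟨k, h.2⟩) := by rw [hT]
  · simp [twistLeg_eq_zero T h]

lemma twistLeg_one_apply (T : Matrix (ι × ι) (ι × ι) ℂ) {n : ℕ} (g f : Fin (n + 2) → ι) :
    twistLeg T (n + 2) 1 g f =
      if ∀ j : Fin (n + 2), (j : ℕ) ≠ 0 → (j : ℕ) ≠ 1 → g j = f j then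
        T (g 0, g 1) (f 0, f 1)
      else 0 := by
  rw [twistLeg_apply T (le_refl 1) (by omega)]
  simp only [show (1 : ℕ) - 1 = 0 from rfl, Fin.mk_zero, Fin.mk_one]

lemma ampMat_ampMat_apply {n : ℕ} (M : Matrix (Fin n → ι) (Fin n → ι) ℂ)
    (g f : Fin (n + 2) → ι) :
    ampMat (n + 1) (ampMat n M) g f =
      if g 0 = f 0 ∧ g 1 = f 1 then
        M (fun i => g i.succ.succ) (fun i => f i.succ.succ)
      else 0 := by
  simp only [ampMat, of_apply, Function.comp_apply, Fin.succ_zero_eq_one, ite_and]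
  rfl

lemma twistLeg_one_comm (T : Matrix (ι × ι) (ι × ι) ℂ) {n : ℕ}
    (M : Matrix (Fin n → ι) (Fin n → ι) ℂ) :
    twistLeg T (n + 2) 1 * ampMat (n + 1) (ampMat n M) =
      ampMat (n + 1) (ampMat n M) * twistLeg T (n + 2) 1 := by
  ext g f
  rw [mul_apply, mul_apply]
  set h₀ : Fin (n + 2) → ι :=
    fun j => if (j : ℕ) = 0 then f 0 else if (j : ℕ) = 1 then f 1 else g j with hh₀
  set h₁ : Fin (n + 2) → ι :=
    fun j => if (j : ℕ) = 0 then g 0 else if (j : ℕ) = 1 then g 1 else f j with hh₁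
  have e00 : h₀ 0 = f 0 := by simp [hh₀]
  have e01 : h₀ 1 = f 1 := by simp [hh₀, Fin.val_one]
  have e10 : h₁ 0 = g 0 := by simp [hh₁]
  have e11 : h₁ 1 = g 1 := by simp [hh₁, Fin.val_one]
  have e0s : ∀ j : Fin (n + 2), (j : ℕ) ≠ 0 → (j : ℕ) ≠ 1 → h₀ j = g j := by
    intro j hj0 hj1
    simp [hh₀, hj0, hj1]
    exact fun h => absurd (by simp [h]) hj0
  have e1s : ∀ j : Fin (n + 2), (j : ℕ) ≠ 0 → (j : ℕ) ≠ 1 → h₁ j = f j := by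
    intro j hj0 hj1
    simp [hh₁, hj0, hj1]
    exact fun h => absurd (by simp [h]) hj0
  have hL : ∀ h : Fin (n + 2) → ι,
      twistLeg T (n + 2) 1 g h * ampMat (n + 1) (ampMat n M) h f ≠ 0 → h = h₀ := by
    intro h hne
    rw [twistLeg_one_apply, ampMat_ampMat_apply] at hne
    by_cases c1 : ∀ j : Fin (n + 2), (j : ℕ) ≠ 0 → (j : ℕ) ≠ 1 → g j = h j
    · by_cases c2 : h 0 = f 0 ∧ h 1 = f 1
      · funext j
        by_cases j0 : (j : ℕ) = 0
        · have hj : j = 0 := by ext; simpa using j0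
          rw [hj, e00, c2.1]
        · by_cases j1 : (j : ℕ) = 1
          · have hj : j = 1 := by ext; simpa [Fin.val_one] using j1
            rw [hj, e01, c2.2]
          · rw [e0s j j0 j1]
            exact (c1 j j0 j1).symm
      · rw [if_neg c2, mul_zero] at hne
        exact absurd rfl hne
    · rw [if_neg c1, zero_mul] at hne
      exact absurd rfl hne
  have hR : ∀ h : Fin (n + 2) → ι,
      ampMat (n + 1) (ampMat n M) g h * twistLeg T (n + 2) 1 h f ≠ 0 → h = h₁ := by
    intro h hne
    rw [twistLeg_one_apply, ampMat_ampMat_apply] at hne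
    by_cases c1 : ∀ j : Fin (n + 2), (j : ℕ) ≠ 0 → (j : ℕ) ≠ 1 → h j = f j
    · by_cases c2 : g 0 = h 0 ∧ g 1 = h 1
      · funext j
        by_cases j0 : (j : ℕ) = 0
        · have hj : j = 0 := by ext; simpa using j0
          rw [hj, e10, ← c2.1]
        · by_cases j1 : (j : ℕ) = 1
          · have hj : j = 1 := by ext; simpa [Fin.val_one] using j1
            rw [hj, e11, ← c2.2]
          · rw [e1s j j0 j1]
            exact c1 j j0 j1
      · rw [if_neg c2, zero_mul] at hne
        exact absurd rfl hne
    · rw [if_neg c1, mul_zero] at hne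
      exact absurd rfl hne
  rw [Finset.sum_eq_single h₀ (fun h _ hne => by_contra fun hc => hne (hL h hc))
      (fun hmem => absurd (Finset.mem_univ _) hmem),
    Finset.sum_eq_single h₁ (fun h _ hne => by_contra fun hc => hne (hR h hc))
      (fun hmem => absurd (Finset.mem_univ _) hmem)]
  rw [twistLeg_one_apply, ampMat_ampMat_apply, twistLeg_one_apply, ampMat_ampMat_apply]
  have hM0 : (fun i : Fin n => h₀ i.succ.succ) = fun i => g i.succ.succ := by
    funext i
    exact e0s _ (by simp [Fin.val_succ]) (by simp [Fin.val_succ])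
  have hM1 : (fun i : Fin n => h₁ i.succ.succ) = fun i => f i.succ.succ := by
    funext i
    exact e1s _ (by simp [Fin.val_succ]) (by simp [Fin.val_succ])
  rw [if_pos (fun j hj0 hj1 => (e0s j hj0 hj1).symm), if_pos ⟨e00, e01⟩,
    if_pos ⟨e10.symm, e11.symm⟩, if_pos e1s, e00, e01, e10, e11, hM0, hM1]
  exact mul_comm _ _

/-- The matrix `R_n = 1 + T_1 + T_1 T_2 + ⋯ + T_1 ⋯ T_n`. -/
noncomputable def Rmat (T : Matrix (ι × ι) (ι × ι) ℂ) (n : ℕ) :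
    Matrix (Fin (n + 1) → ι) (Fin (n + 1) → ι) ℂ :=
  ∑ k ∈ Finset.range (n + 1), ((List.range k).map (fun j => twistLeg T (n + 1) (j + 1))).prod

lemma twistedSymmetrizer_succ (T : Matrix (ι × ι) (ι × ι) ℂ) (n : ℕ) :
    twistedSymmetrizer T (n + 1) = ampMat n (twistedSymmetrizer T n) * Rmat T n := rfl

lemma Rmat_zero (T : Matrix (ι × ι) (ι × ι) ℂ) : Rmat T 0 = 1 := by
  simp [Rmat]

lemma Rmat_succ (T : Matrix (ι × ι) (ι × ι) ℂ) (n : ℕ) :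
    Rmat T (n + 1) = 1 + twistLeg T (n + 2) 1 * ampMat (n + 1) (Rmat T n) := by
  have hterm : ∀ k : ℕ,
      ((List.range (k + 1)).map fun j => twistLeg T (n + 2) (j + 1)).prod =
        twistLeg T (n + 2) 1 *
          ampMat (n + 1) (((List.range k).map fun j => twistLeg T (n + 1) (j + 1)).prod) := by
    intro k
    rw [List.range_succ_eq_map, List.map_cons, List.prod_cons, List.map_map,
      ampMat_listProd (n + 1) (List.range k) fun j => twistLeg T (n + 1) (j + 1)]
    have hfun : ((fun j => twistLeg T (n + 2) (j + 1)) ∘ Nat.succ) =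
        fun j => ampMat (n + 1) (twistLeg T (n + 1) (j + 1)) :=
      funext fun j => (ampMat_twistLeg T (Nat.le_add_left 1 j)).symm
    rw [hfun]
  have h0 : ((List.range 0).map fun j => twistLeg T (n + 1 + 1) (j + 1)).prod = 1 := by simp
  have hsum : ∑ k ∈ Finset.range (n + 1),
      ((List.range (k + 1)).map fun j => twistLeg T (n + 1 + 1) (j + 1)).prod =
      twistLeg T (n + 2) 1 * ampMat (n + 1) (Rmat T n) := by
    rw [Rmat, ampMat_sum, Finset.mul_sum]
    exact Finset.sum_congr rfl fun k _ => hterm k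
  rw [Rmat, Finset.sum_range_succ', h0, hsum]
  exact add_comm _ _

lemma key_comm {T : Matrix (ι × ι) (ι × ι) ℂ} (hT : T.IsHermitian) :
    ∀ n : ℕ, ampMat n (twistedSymmetrizer T n) * Rmat T n =
      (Rmat T n)ᴴ * ampMat n (twistedSymmetrizer T n) := by
  intro n
  induction n with
  | zero =>
    have h1 : twistedSymmetrizer T 0 = (1 : Matrix (Fin 0 → ι) (Fin 0 → ι) ℂ) := rfl
    rw [h1, ampMat_one, Rmat_zero, conjTranspose_one]
  | succ n ih =>
    set A := ampMat (n + 1) (ampMat n (twistedSymmetrizer T n)) with hA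
    set S := ampMat (n + 1) (Rmat T n) with hS
    set t1 := twistLeg T (n + 2) 1 with ht1def
    have hAS : A * S = Sᴴ * A := by
      have h := congrArg (ampMat (n + 1)) ih
      rwa [ampMat_mul, ampMat_mul, ← ampMat_conjTranspose] at h
    have hcomm : t1 * A = A * t1 := twistLeg_one_comm T _
    have ht1 : t1ᴴ = t1 := twistLeg_conjTranspose hT _ _
    have hQ : ampMat (n + 1) (twistedSymmetrizer T (n + 1)) = A * S := by
      rw [twistedSymmetrizer_succ, ampMat_mul]
    rw [hQ, Rmat_succ, conjTranspose_add, conjTranspose_one, conjTranspose_mul, ht1,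
      mul_add, mul_one, add_mul, one_mul]
    congr 1
    calc A * S * (t1 * S) = A * S * t1 * S := (mul_assoc _ t1 S).symm
      _ = Sᴴ * A * t1 * S := by rw [hAS]
      _ = Sᴴ * (A * t1) * S := by rw [mul_assoc Sᴴ A t1]
      _ = Sᴴ * (t1 * A) * S := by rw [hcomm]
      _ = Sᴴ * t1 * (A * S) := by rw [← mul_assoc Sᴴ t1 A, mul_assoc (Sᴴ * t1) A S]

lemma twistedSymmetrizer_isHermitian {T : Matrix (ι × ι) (ι × ι) ℂ} (hT : T.IsHermitian) :
    ∀ n : ℕ, (twistedSymmetrizer T n).IsHermitian := by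
  intro n
  induction n with
  | zero => exact Matrix.isHermitian_one
  | succ n ih =>
    show (twistedSymmetrizer T (n + 1))ᴴ = twistedSymmetrizer T (n + 1)
    rw [twistedSymmetrizer_succ, conjTranspose_mul, ampMat_conjTranspose, ih.eq,
      ← key_comm hT n]

lemma sum_normsq_mulVec_le {m : Type*} [Fintype m] [DecidableEq m] (M : Matrix m m ℂ)
    (y : m → ℂ) :
    ∑ i, ‖(M *ᵥ y) i‖ ^ 2 ≤ ‖Matrix.toEuclideanCLM (𝕜 := ℂ) M‖ ^ 2 * ∑ i, ‖y i‖ ^ 2 := by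
  have h := (Matrix.toEuclideanCLM (𝕜 := ℂ) M).le_opNorm ((WithLp.equiv 2 (m → ℂ)).symm y)
  have h2 := pow_le_pow_left₀ (norm_nonneg _) h 2
  rw [mul_pow] at h2
  calc ∑ i, ‖(M *ᵥ y) i‖ ^ 2
      = ‖Matrix.toEuclideanCLM (𝕜 := ℂ) M ((WithLp.equiv 2 (m → ℂ)).symm y)‖ ^ 2 := by
        rw [WithLp.equiv_symm_apply, Matrix.toEuclideanCLM_toLp, PiLp.norm_sq_eq_of_L2]
    _ ≤ ‖Matrix.toEuclideanCLM (𝕜 := ℂ) M‖ ^ 2 * ‖(WithLp.equiv 2 (m → ℂ)).symm y‖ ^ 2 := h2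
    _ = ‖Matrix.toEuclideanCLM (𝕜 := ℂ) M‖ ^ 2 * ∑ i, ‖y i‖ ^ 2 := by
        rw [PiLp.norm_sq_eq_of_L2]
        rfl

lemma norm_toEuclideanCLM_le_of_sq {m : Type*} [Fintype m] [DecidableEq m]
    (M : Matrix m m ℂ) (c : ℝ) (hc : 0 ≤ c)
    (h : ∀ y : m → ℂ, ∑ i, ‖(M *ᵥ y) i‖ ^ 2 ≤ c ^ 2 * ∑ i, ‖y i‖ ^ 2) :
    ‖Matrix.toEuclideanCLM (𝕜 := ℂ) M‖ ≤ c := by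
  refine ContinuousLinearMap.opNorm_le_bound _ hc fun x => ?_
  have hx : x = (WithLp.equiv 2 (m → ℂ)).symm (WithLp.equiv 2 (m → ℂ) x) := rfl
  set y := WithLp.equiv 2 (m → ℂ) x with hy
  refine le_of_pow_le_pow_left₀ two_ne_zero (by positivity) ?_
  rw [mul_pow]
  calc ‖Matrix.toEuclideanCLM (𝕜 := ℂ) M x‖ ^ 2
      = ∑ i, ‖(M *ᵥ y) i‖ ^ 2 := by
        rw [hx, WithLp.equiv_symm_apply, Matrix.toEuclideanCLM_toLp, PiLp.norm_sq_eq_of_L2]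
    _ ≤ c ^ 2 * ∑ i, ‖y i‖ ^ 2 := h y
    _ = c ^ 2 * ‖x‖ ^ 2 := by rw [PiLp.norm_sq_eq_of_L2]; rfl

lemma norm_toEuclideanCLM_submatrix_le {l m : Type*} [Fintype l] [DecidableEq l]
    [Fintype m] [DecidableEq m] (M : Matrix m m ℂ) (e : l ≃ m) :
    ‖Matrix.toEuclideanCLM (𝕜 := ℂ) (M.submatrix e e)‖ ≤
      ‖Matrix.toEuclideanCLM (𝕜 := ℂ) M‖ := by
  refine norm_toEuclideanCLM_le_of_sq _ _ (norm_nonneg _) fun y => ?_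
  rw [Matrix.submatrix_mulVec_equiv]
  calc ∑ i, ‖((M *ᵥ (y ∘ ⇑e.symm)) ∘ ⇑e) i‖ ^ 2
      = ∑ i, ‖(M *ᵥ (y ∘ ⇑e.symm)) i‖ ^ 2 :=
        Fintype.sum_equiv e _ _ fun i => rfl
    _ ≤ ‖Matrix.toEuclideanCLM (𝕜 := ℂ) M‖ ^ 2 * ∑ i, ‖(y ∘ ⇑e.symm) i‖ ^ 2 :=
        sum_normsq_mulVec_le M _
    _ = ‖Matrix.toEuclideanCLM (𝕜 := ℂ) M‖ ^ 2 * ∑ i, ‖y i‖ ^ 2 := by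
        congr 1
        exact Fintype.sum_equiv e.symm _ _ fun i => rfl

lemma blockDiagonal_mulVec {p r : Type*} [Fintype p] [DecidableEq p] [Fintype r]
    [DecidableEq r] (P : Matrix p p ℂ) (y : p × r → ℂ) (i : p) (k : r) :
    ((Matrix.blockDiagonal fun _ : r => P) *ᵥ y) (i, k) = (P *ᵥ fun q => y (q, k)) i := by
  rw [Matrix.mulVec, Matrix.mulVec, dotProduct, dotProduct,
    Fintype.sum_prod_type]
  rw [Finset.sum_comm]
  rw [Fintype.sum_eq_single k ?_]
  · simp [Matrix.blockDiagonal_apply]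
  · intro l hl
    apply Finset.sum_eq_zero
    intro j _
    simp [Matrix.blockDiagonal_apply, Ne.symm hl]

lemma norm_toEuclideanCLM_blockDiagonal_le {p r : Type*} [Fintype p] [DecidableEq p]
    [Fintype r] [DecidableEq r] (P : Matrix p p ℂ) :
    ‖Matrix.toEuclideanCLM (𝕜 := ℂ) (Matrix.blockDiagonal fun _ : r => P)‖ ≤
      ‖Matrix.toEuclideanCLM (𝕜 := ℂ) P‖ := by
  refine norm_toEuclideanCLM_le_of_sq _ _ (norm_nonneg _) fun y => ?_
  calc ∑ ik : p × r, ‖((Matrix.blockDiagonal fun _ : r => P) *ᵥ y) ik‖ ^ 2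
      = ∑ k : r, ∑ i : p, ‖(P *ᵥ fun q => y (q, k)) i‖ ^ 2 := by
        rw [Fintype.sum_prod_type, Finset.sum_comm]
        exact Finset.sum_congr rfl fun k _ => Finset.sum_congr rfl fun i _ => by
          rw [blockDiagonal_mulVec]
    _ ≤ ∑ k : r, ‖Matrix.toEuclideanCLM (𝕜 := ℂ) P‖ ^ 2 * ∑ i : p, ‖y (i, k)‖ ^ 2 :=
        Finset.sum_le_sum fun k _ => sum_normsq_mulVec_le P _
    _ = ‖Matrix.toEuclideanCLM (𝕜 := ℂ) P‖ ^ 2 * ∑ ik : p × r, ‖y ik‖ ^ 2 := by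
        rw [← Finset.mul_sum, Fintype.sum_prod_type, Finset.sum_comm]

/-- The reindexing equivalence realizing a twist leg as a block diagonal matrix. -/
def eLeg (ι : Type*) (n k : ℕ) (h1 : 1 ≤ k) (h2 : k < n) :
    (Fin n → ι) ≃ ((ι × ι) × ({j : Fin n // (j : ℕ) ≠ k - 1 ∧ (j : ℕ) ≠ k} → ι)) where
  toFun g := ((g ⟨k - 1, by omega⟩, g ⟨k, h2⟩), fun j => g j)
  invFun x := fun j =>
    if hj1 : (j : ℕ) = k - 1 then x.1.1
    else if hj2 : (j : ℕ) = k then x.1.2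
    else x.2 ⟨j, hj1, hj2⟩
  left_inv g := by
    funext j
    dsimp only
    by_cases hj1 : (j : ℕ) = k - 1
    · have : j = ⟨k - 1, by omega⟩ := by ext; simpa using hj1
      rw [dif_pos hj1, this]
    · by_cases hj2 : (j : ℕ) = k
      · have : j = ⟨k, h2⟩ := by ext; simpa using hj2
        rw [dif_neg hj1, dif_pos hj2, this]
      · rw [dif_neg hj1, dif_neg hj2]
  right_inv x := by
    obtain ⟨⟨a, b⟩, r⟩ := x
    dsimp only
    refine Prod.ext (Prod.ext ?_ ?_) ?_
    · simp
    · have hne : ¬(k = k - 1) := by omega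
      simp [hne]
    · funext j
      simp [j.2.1, j.2.2]

lemma twistLeg_eq_submatrix (T : Matrix (ι × ι) (ι × ι) ℂ) {n k : ℕ} (h1 : 1 ≤ k)
    (h2 : k < n) :
    twistLeg T n k =
      Matrix.submatrix
        (Matrix.blockDiagonal fun _ : ({j : Fin n // (j : ℕ) ≠ k - 1 ∧ (j : ℕ) ≠ k} → ι) => T)
        (eLeg ι n k h1 h2) (eLeg ι n k h1 h2) := by
  ext g f
  rw [twistLeg_apply T h1 h2, Matrix.submatrix_apply]
  rw [show eLeg ι n k h1 h2 g = ((g ⟨k - 1, by omega⟩, g ⟨k, h2⟩), fun j => g j.1) from rfl,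
    show eLeg ι n k h1 h2 f = ((f ⟨k - 1, by omega⟩, f ⟨k, h2⟩), fun j => f j.1) from rfl,
    Matrix.blockDiagonal_apply]
  refine if_congr ?_ rfl rfl
  rw [funext_iff]
  constructor
  · intro H j
    exact H j.1 j.2.1 j.2.2
  · intro H j hj1 hj2
    exact H ⟨j, hj1, hj2⟩

lemma norm_twistLeg_le (T : Matrix (ι × ι) (ι × ι) ℂ) (n k : ℕ) :
    ‖Matrix.toEuclideanCLM (𝕜 := ℂ) (twistLeg T n k)‖ ≤
      ‖Matrix.toEuclideanCLM (𝕜 := ℂ) T‖ := by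
  by_cases h : 1 ≤ k ∧ k < n
  · rw [twistLeg_eq_submatrix T h.1 h.2]
    exact (norm_toEuclideanCLM_submatrix_le _ _).trans
      (norm_toEuclideanCLM_blockDiagonal_le T)
  · rw [twistLeg_eq_zero T h, map_zero, norm_zero]
    exact norm_nonneg _

lemma norm_listProd_le {T : Matrix (ι × ι) (ι × ι) ℂ}
    (hnorm : ‖Matrix.toEuclideanCLM (𝕜 := ℂ) T‖ ≤ 1 / 2) (n : ℕ) (k : ℕ) :
    ‖Matrix.toEuclideanCLM (𝕜 := ℂ)
        (((List.range k).map fun j => twistLeg T (n + 1) (j + 1)).prod)‖ ≤ (1 / 2 : ℝ) ^ k := by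
  induction k with
  | zero =>
    rw [List.range_zero, List.map_nil, List.prod_nil, _root_.map_one, pow_zero,
      ContinuousLinearMap.one_def]
    exact ContinuousLinearMap.norm_id_le
  | succ k ih =>
    rw [List.range_succ, List.map_append, List.prod_append, List.map_cons, List.map_nil,
      List.prod_cons, List.prod_nil, mul_one, _root_.map_mul, pow_succ]
    exact (norm_mul_le _ _).trans
      (mul_le_mul ih ((norm_twistLeg_le T _ _).trans hnorm) (norm_nonneg _) (by positivity))

lemma geo_sum (n : ℕ) : ∑ k ∈ Finset.range n, ((1 : ℝ) / 2) ^ (k + 1) = 1 - (1 / 2) ^ n := by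
  induction n with
  | zero => simp
  | succ n ih =>
    rw [Finset.sum_range_succ, ih]
    ring

lemma norm_Rmat_sub_one_le {T : Matrix (ι × ι) (ι × ι) ℂ}
    (hnorm : ‖Matrix.toEuclideanCLM (𝕜 := ℂ) T‖ ≤ 1 / 2) (n : ℕ) :
    ‖Matrix.toEuclideanCLM (𝕜 := ℂ) (Rmat T n) - 1‖ ≤ 1 - (1 / 2 : ℝ) ^ n := by
  have h1 : Matrix.toEuclideanCLM (𝕜 := ℂ) (Rmat T n) =
      ∑ k ∈ Finset.range (n + 1), Matrix.toEuclideanCLM (𝕜 := ℂ)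
        (((List.range k).map fun j => twistLeg T (n + 1) (j + 1)).prod) := by
    rw [Rmat, map_sum]
  have h0 : Matrix.toEuclideanCLM (𝕜 := ℂ)
      (((List.range 0).map fun j => twistLeg T (n + 1) (j + 1)).prod) = 1 := by
    simp
  rw [h1, Finset.sum_range_succ', h0, add_sub_cancel_right]
  refine (norm_sum_le _ _).trans ?_
  rw [← geo_sum n]
  exact Finset.sum_le_sum fun k _ => norm_listProd_le hnorm n (k + 1)

lemma re_dotProduct_Rmat_pos {T : Matrix (ι × ι) (ι × ι) ℂ}
    (hnorm : ‖Matrix.toEuclideanCLM (𝕜 := ℂ) T‖ ≤ 1 / 2) (n : ℕ)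
    (x : (Fin (n + 1) → ι) → ℂ) (hx : x ≠ 0) :
    0 < Complex.re (dotProduct (star x) (Rmat T n *ᵥ x)) := by
  set xe : EuclideanSpace ℂ (Fin (n + 1) → ι) := (WithLp.equiv 2 ((Fin (n + 1) → ι) → ℂ)).symm x
    with hxe_def
  have hxe : xe ≠ 0 := by
    intro h0
    exact hx (by simpa [hxe_def] using congrArg (WithLp.equiv 2 ((Fin (n + 1) → ι) → ℂ)) h0)
  have hxe_pos : 0 < ‖xe‖ := norm_pos_iff.mpr hxe
  have hdot : dotProduct (star x) (Rmat T n *ᵥ x) =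
      inner (𝕜 := ℂ) xe (Matrix.toEuclideanCLM (𝕜 := ℂ) (Rmat T n) xe) := by
    rw [hxe_def, WithLp.equiv_symm_apply, Matrix.toEuclideanCLM_toLp,
      EuclideanSpace.inner_toLp_toLp, dotProduct_comm]
  rw [hdot]
  set D := Matrix.toEuclideanCLM (𝕜 := ℂ) (Rmat T n) - 1 with hD
  have hsplit : inner (𝕜 := ℂ) xe (Matrix.toEuclideanCLM (𝕜 := ℂ) (Rmat T n) xe) =
      inner (𝕜 := ℂ) xe xe + inner (𝕜 := ℂ) xe (D xe) := by
    rw [← inner_add_right]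
    congr 1
    simp [hD, ContinuousLinearMap.sub_apply]
  rw [hsplit, Complex.add_re]
  have h1 : Complex.re (inner (𝕜 := ℂ) xe xe) = ‖xe‖ ^ 2 := by
    exact inner_self_eq_norm_sq (𝕜 := ℂ) xe
  have h2 : |Complex.re (inner (𝕜 := ℂ) xe (D xe))| ≤ (1 - (1 / 2 : ℝ) ^ n) * ‖xe‖ ^ 2 := by
    calc |Complex.re (inner (𝕜 := ℂ) xe (D xe))| ≤ ‖inner (𝕜 := ℂ) xe (D xe)‖ :=
          Complex.abs_re_le_norm _
      _ ≤ ‖xe‖ * ‖D xe‖ := norm_inner_le_norm _ _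
      _ ≤ ‖xe‖ * (‖D‖ * ‖xe‖) := by
          refine mul_le_mul_of_nonneg_left (D.le_opNorm xe) (norm_nonneg _)
      _ ≤ ‖xe‖ * ((1 - (1 / 2 : ℝ) ^ n) * ‖xe‖) := by
          refine mul_le_mul_of_nonneg_left
            (mul_le_mul_of_nonneg_right (norm_Rmat_sub_one_le hnorm n) (norm_nonneg _))
            (norm_nonneg _)
      _ = (1 - (1 / 2 : ℝ) ^ n) * ‖xe‖ ^ 2 := by ring
  have hpow : (0 : ℝ) < (1 / 2 : ℝ) ^ n := by positivity
  have habs := abs_le.mp h2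
  rw [h1]
  have hps : 0 < (1 / 2 : ℝ) ^ n * ‖xe‖ ^ 2 := by positivity
  nlinarith [habs.1, hps]

lemma posDef_submatrix_equiv {l m : Type*} [Fintype l] [DecidableEq l] [Fintype m]
    [DecidableEq m] {A : Matrix m m ℂ} (hA : A.PosDef) (e : l ≃ m) :
    (A.submatrix e e).PosDef := by
  refine Matrix.PosDef.of_dotProduct_mulVec_pos ?_ fun x hx => ?_
  · show (A.submatrix ⇑e ⇑e)ᴴ = A.submatrix ⇑e ⇑e
    rw [Matrix.conjTranspose_submatrix, hA.1.eq]
  · rw [Matrix.submatrix_mulVec_equiv]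
    have hre : dotProduct (star x) ((A *ᵥ (x ∘ ⇑e.symm)) ∘ ⇑e) =
        dotProduct (star (x ∘ ⇑e.symm)) (A *ᵥ (x ∘ ⇑e.symm)) := by
      rw [dotProduct, dotProduct]
      exact Fintype.sum_equiv e _ _ fun i => by simp
    rw [hre]
    refine hA.dotProduct_mulVec_pos fun h0 => hx (funext fun i => ?_)
    calc x i = (x ∘ ⇑e.symm) (e i) := by simp
      _ = 0 := by rw [h0]; rfl

lemma posDef_blockDiagonal {p r : Type*} [Fintype p] [DecidableEq p] [Fintype r]
    [DecidableEq r] {P : Matrix p p ℂ} (hP : P.PosDef) :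
    (Matrix.blockDiagonal fun _ : r => P).PosDef := by
  refine Matrix.PosDef.of_dotProduct_mulVec_pos ?_ fun x hx => ?_
  · show (Matrix.blockDiagonal fun _ : r => P)ᴴ = _
    rw [Matrix.blockDiagonal_conjTranspose]
    exact congrArg Matrix.blockDiagonal (funext fun _ => hP.1.eq)
  · have hsum : dotProduct (star x) ((Matrix.blockDiagonal fun _ : r => P) *ᵥ x) =
        ∑ k : r, dotProduct (star fun q => x (q, k)) (P *ᵥ fun q => x (q, k)) := by
      rw [dotProduct, Fintype.sum_prod_type, Finset.sum_comm]
      refine Finset.sum_congr rfl fun k _ => ?_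
      rw [dotProduct]
      refine Finset.sum_congr rfl fun i _ => ?_
      rw [blockDiagonal_mulVec]
      rfl
    rw [hsum]
    have hex : ∃ k : r, (fun q => x (q, k)) ≠ 0 := by
      by_contra hall
      push_neg at hall
      exact hx (funext fun qk => congrFun (hall qk.2) qk.1)
    obtain ⟨k0, hk0⟩ := hex
    exact Finset.sum_pos' (fun k _ => hP.posSemidef.dotProduct_mulVec_nonneg _)
      ⟨k0, Finset.mem_univ _, hP.dotProduct_mulVec_pos hk0⟩

lemma ampMat_posDef {n : ℕ} {P : Matrix (Fin n → ι) (Fin n → ι) ℂ} (hP : P.PosDef) :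
    (ampMat n P).PosDef := by
  rw [ampMat_eq]
  exact posDef_submatrix_equiv (posDef_blockDiagonal hP) _

lemma posDef_of_eigenvalues_pos {m : Type*} [Fintype m] [DecidableEq m] {A : Matrix m m ℂ}
    (hA : A.IsHermitian) (h : ∀ i, 0 < hA.eigenvalues i) : A.PosDef := by
  have hsd : A.PosSemidef := hA.posSemidef_iff_eigenvalues_nonneg.mpr fun i => (h i).le
  have hUnit : IsUnit A := by
    rw [Matrix.isUnit_iff_isUnit_det]
    refine Ne.isUnit ?_
    rw [hA.det_eq_prod_eigenvalues]
    exact Finset.prod_ne_zero_iff.mpr fun i _ => Complex.ofReal_ne_zero.mpr (h i).ne'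
  refine Matrix.PosDef.of_dotProduct_mulVec_pos hA fun x hx => ?_
  refine lt_of_le_of_ne (hsd.dotProduct_mulVec_nonneg x) fun heq => hx ?_
  have h0 : A *ᵥ x = 0 := (hsd.dotProduct_mulVec_zero_iff x).1 heq.symm
  exact Matrix.mulVec_injective_iff_isUnit.mpr hUnit (h0.trans (Matrix.mulVec_zero A).symm)

lemma posDef_of_posDef_mul {m : Type*} [Fintype m] [DecidableEq m] {A P R : Matrix m m ℂ}
    (hA : A.PosDef) (hP : P.IsHermitian) (hPAR : P = A * R)
    (hR : ∀ x : m → ℂ, x ≠ 0 → 0 < Complex.re (dotProduct (star x) (R *ᵥ x))) :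
    P.PosDef := by
  refine posDef_of_eigenvalues_pos hP fun i => ?_
  have hv0 : ⇑(hP.eigenvectorBasis i) ≠ (0 : m → ℂ) := by
    intro hc
    exact hP.eigenvectorBasis.orthonormal.ne_zero i (by simpa using congrArg (WithLp.toLp 2) hc)
  set v : m → ℂ := ⇑(hP.eigenvectorBasis i) with hvdef
  have hev : P *ᵥ v = hP.eigenvalues i • v := hP.mulVec_eigenvectorBasis i
  have hdet : IsUnit A.det := (Matrix.isUnit_iff_isUnit_det A).mp hA.isUnit
  have hAR : R = A⁻¹ * P := by
    rw [hPAR, ← Matrix.mul_assoc, Matrix.nonsing_inv_mul A hdet, Matrix.one_mul]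
  have hRv : R *ᵥ v = hP.eigenvalues i • (A⁻¹ *ᵥ v) := by
    calc R *ᵥ v = (A⁻¹ * P) *ᵥ v := by rw [← hAR]
      _ = A⁻¹ *ᵥ (P *ᵥ v) := (Matrix.mulVec_mulVec v A⁻¹ P).symm
      _ = A⁻¹ *ᵥ (hP.eigenvalues i • v) := by rw [hev]
      _ = hP.eigenvalues i • (A⁻¹ *ᵥ v) := Matrix.mulVec_smul A⁻¹ _ v
  have hre := hR v hv0
  rw [hRv, dotProduct_smul] at hre
  have ht : 0 < dotProduct (star v) (A⁻¹ *ᵥ v) := hA.inv.dotProduct_mulVec_pos hv0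
  rw [Complex.lt_def] at ht
  rw [Complex.smul_re, smul_eq_mul] at hre
  have htre : 0 < (dotProduct (star v) (A⁻¹ *ᵥ v)).re := by simpa using ht.1
  nlinarith [hre, htre]

end TwistProof

/-- a Hermitian `T` with operator norm at most `1/2` is a strict twist: all
twisted symmetrizers `P_{T,n}` are positive definite. -/
theorem twistedSymmetrizer_posDef_of_norm_le_half
    {ι : Type*} [Fintype ι] [DecidableEq ι] [Nonempty ι]
    (T : Matrix (ι × ι) (ι × ι) ℂ) (hT : T.IsHermitian)
    (hnorm : ‖Matrix.toEuclideanCLM (𝕜 := ℂ) T‖ ≤ 1 / 2) :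
    ∀ n : ℕ, (twistedSymmetrizer T n).PosDef := by
  intro n
  induction n with
  | zero =>
    show (1 : Matrix (Fin 0 → ι) (Fin 0 → ι) ℂ).PosDef
    exact Matrix.PosDef.one
  | succ n ih =>
    exact TwistProof.posDef_of_posDef_mul (TwistProof.ampMat_posDef ih)
      (TwistProof.twistedSymmetrizer_isHermitian hT (n + 1))
      (TwistProof.twistedSymmetrizer_succ T n)
      (fun x hx => TwistProof.re_dotProduct_Rmat_pos hnorm n x hx)
end

section
/- Let ι be a nonempty finite type and T : Matrix (ι × ι) (ι × ι) ℂ a positive semidefinite matrix whose operator norm (as a linear operator on EuclideanSpace ℂ (ι × ι)) is at most 1. Then for every n ∈ ℕ, the twisted symmetrizer matrix P_{T,n} is positive definite; in particular T is a strict twist. -/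
open scoped ComplexOrder
namespace TwistAux

open Matrix
open scoped Kronecker

variable {ι : Type*} [Fintype ι] [DecidableEq ι]

/-- split off the first coordinate -/
def splitE (n : ℕ) : (Fin (n + 1) → ι) ≃ (ι × (Fin n → ι)) :=
  (Fin.consEquiv fun _ => ι).symm

/-- split off the first two coordinates -/
def split2E (n : ℕ) : (Fin (n + 2) → ι) ≃ ((ι × ι) × (Fin n → ι)) where
  toFun g := ((g 0, g 1), fun i => g i.succ.succ)
  invFun p := Fin.cons p.1.1 (Fin.cons p.1.2 p.2)
  left_inv g := by
    funext i
    refine Fin.cases ?_ (fun j => ?_) i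
    · simp
    · refine Fin.cases ?_ (fun k => ?_) j <;> simp [Fin.succ_zero_eq_one]
  right_inv p := by
    refine Prod.ext (Prod.ext rfl ?_) ?_
    · simp only [← Fin.succ_zero_eq_one, Fin.cons_succ, Fin.cons_zero]
    · funext i
      simp only [Fin.cons_succ]

lemma ampMat_eq (n : ℕ) (P : Matrix (Fin n → ι) (Fin n → ι) ℂ) :
    ampMat n P = ((1 : Matrix ι ι ℂ) ⊗ₖ P).submatrix (splitE n) (splitE n) := by
  ext g f
  simp [ampMat, splitE, Fin.consEquiv, Matrix.submatrix_apply, Matrix.one_apply, ite_mul,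
    Function.comp_def, Fin.tail_def]

lemma ampMat_ampMat (n : ℕ) (Q : Matrix (Fin n → ι) (Fin n → ι) ℂ) :
    ampMat (n + 1) (ampMat n Q) =
      ((1 : Matrix (ι × ι) (ι × ι) ℂ) ⊗ₖ Q).submatrix (split2E n) (split2E n) := by
  ext g f
  simp only [ampMat, Matrix.of_apply, Matrix.submatrix_apply, split2E, Equiv.coe_fn_mk,
    Matrix.kroneckerMap_apply, Matrix.one_apply, Prod.mk.injEq, ite_mul, one_mul, zero_mul]
  by_cases h0 : g 0 = f 0 <;> by_cases h1 : g 1 = f 1 <;>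
    simp [h0, h1, Function.comp_def, Fin.succ_zero_eq_one]

lemma twistLeg_one_eq (T : Matrix (ι × ι) (ι × ι) ℂ) (n : ℕ) :
    twistLeg T (n + 2) 1 =
      (T ⊗ₖ (1 : Matrix (Fin n → ι) (Fin n → ι) ℂ)).submatrix (split2E n) (split2E n) := by
  ext g f
  have h1 : (1 : ℕ) ≤ 1 ∧ 1 < n + 2 := ⟨le_refl 1, by omega⟩
  rw [twistLeg, Matrix.of_apply, dif_pos h1]
  have hiff : (∀ j : Fin (n + 2), j ≠ (⟨1 - 1, by omega⟩ : Fin (n + 2)) →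
      j ≠ (⟨1, h1.2⟩ : Fin (n + 2)) → g j = f j) ↔
      (fun i : Fin n => g i.succ.succ) = (fun i : Fin n => f i.succ.succ) := by
    constructor
    · intro h
      funext i
      refine h i.succ.succ ?_ ?_
      · exact fun hc => Fin.succ_ne_zero i.succ (by simpa using hc)
      · intro hc
        rw [show (⟨1, h1.2⟩ : Fin (n + 2)) = Fin.succ 0 from rfl] at hc
        exact Fin.succ_ne_zero _ (Fin.succ_injective _ hc)
    · intro h j
      refine Fin.cases (fun hj0 _ => ?_) (fun k => ?_) j
      · simp [Fin.ext_iff] at hj0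
      · refine Fin.cases (fun _ hj1 => ?_) (fun i _ _ => congrFun h i) k
        simp [Fin.ext_iff] at hj1
  simp only [Matrix.submatrix_apply, split2E, Equiv.coe_fn_mk, Matrix.kroneckerMap_apply,
    Matrix.one_apply, mul_ite, mul_one, mul_zero]
  by_cases hc : (fun i : Fin n => g i.succ.succ) = (fun i : Fin n => f i.succ.succ)
  · rw [if_pos (hiff.mpr hc), if_pos hc]
    congr 1
  · rw [if_neg (fun hh => hc (hiff.mp hh)), if_neg hc]

lemma kron_conjTranspose {m' n' : Type*} (A : Matrix m' m' ℂ) (B : Matrix n' n' ℂ) :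
    (A ⊗ₖ B)ᴴ = Aᴴ ⊗ₖ Bᴴ := by
  ext p q
  simp [Matrix.conjTranspose_apply, Matrix.kroneckerMap_apply, star_mul']

lemma ampMat_one (n : ℕ) : ampMat n (1 : Matrix (Fin n → ι) (Fin n → ι) ℂ) = 1 := by
  rw [ampMat_eq, Matrix.one_kronecker_one, Matrix.submatrix_one_equiv]

lemma ampMat_mul (n : ℕ) (P Q : Matrix (Fin n → ι) (Fin n → ι) ℂ) :
    ampMat n (P * Q) = ampMat n P * ampMat n Q := by
  rw [ampMat_eq, ampMat_eq, ampMat_eq, Matrix.submatrix_mul_equiv,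
    ← Matrix.mul_kronecker_mul, one_mul]

lemma ampMat_conjTranspose (n : ℕ) (P : Matrix (Fin n → ι) (Fin n → ι) ℂ) :
    (ampMat n P)ᴴ = ampMat n Pᴴ := by
  rw [ampMat_eq, ampMat_eq, Matrix.conjTranspose_submatrix, kron_conjTranspose,
    Matrix.conjTranspose_one]

lemma ampMat_add (n : ℕ) (P Q : Matrix (Fin n → ι) (Fin n → ι) ℂ) :
    ampMat n (P + Q) = ampMat n P + ampMat n Q := by
  ext g f
  simp only [ampMat, Matrix.of_apply, Matrix.add_apply]
  split_ifs <;> simp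

lemma ampMat_zero (n : ℕ) : ampMat n (0 : Matrix (Fin n → ι) (Fin n → ι) ℂ) = 0 := by
  ext g f
  simp only [ampMat, Matrix.of_apply, Matrix.zero_apply]
  split_ifs <;> simp

lemma ampMat_sum {κ : Type*} (n : ℕ) (s : Finset κ)
    (F : κ → Matrix (Fin n → ι) (Fin n → ι) ℂ) :
    ampMat n (∑ k ∈ s, F k) = ∑ k ∈ s, ampMat n (F k) :=
  map_sum (AddMonoidHom.mk' (ampMat n) (ampMat_add n)) F s

lemma twistLeg_one_comm (T : Matrix (ι × ι) (ι × ι) ℂ) (n : ℕ)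
    (Q : Matrix (Fin n → ι) (Fin n → ι) ℂ) :
    twistLeg T (n + 2) 1 * ampMat (n + 1) (ampMat n Q) =
      ampMat (n + 1) (ampMat n Q) * twistLeg T (n + 2) 1 := by
  rw [twistLeg_one_eq, ampMat_ampMat, Matrix.submatrix_mul_equiv, Matrix.submatrix_mul_equiv,
    ← Matrix.mul_kronecker_mul, ← Matrix.mul_kronecker_mul, one_mul, mul_one, one_mul, mul_one]

lemma posDef_submatrix_equiv {m' n' : Type*} [Fintype m'] [Fintype n'] [DecidableEq m']
    [DecidableEq n'] {M : Matrix n' n' ℂ} (hM : M.PosDef) (e : m' ≃ n') :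
    (M.submatrix e e).PosDef := by
  refine PosDef.of_dotProduct_mulVec_pos (hM.1.submatrix e) fun x hx => ?_
  have h1 : M.submatrix e e *ᵥ x = (M *ᵥ (x ∘ e.symm)) ∘ e :=
    Matrix.submatrix_mulVec_equiv M x e e
  rw [h1]
  have h2 : star x ⬝ᵥ ((M *ᵥ (x ∘ e.symm)) ∘ ⇑e) =
      star (x ∘ e.symm) ⬝ᵥ (M *ᵥ (x ∘ e.symm)) := by
    rw [dotProduct]
    rw [dotProduct]
    rw [← Equiv.sum_comp e (fun j => star (x ∘ e.symm) j * (M *ᵥ (x ∘ e.symm)) j)]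
    simp [Function.comp]
  rw [h2]
  exact hM.dotProduct_mulVec_pos (fun hc => hx (by ext i; simpa using congrFun hc (e.symm.symm i)))

lemma posDef_one_kron {κ β : Type*} [Fintype κ] [DecidableEq κ] [Fintype β] [DecidableEq β]
    {P : Matrix β β ℂ} (hP : P.PosDef) : ((1 : Matrix κ κ ℂ) ⊗ₖ P).PosDef := by
  refine PosDef.of_dotProduct_mulVec_pos ?_ ?_
  · show _ᴴ = _
    rw [kron_conjTranspose, Matrix.conjTranspose_one, hP.1.eq]
  · intro x hx
    have hmv : ∀ (a : κ) (b : β),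
        (((1 : Matrix κ κ ℂ) ⊗ₖ P) *ᵥ x) (a, b) = (P *ᵥ fun z => x (a, z)) b := by
      intro a b
      simp [Matrix.mulVec, dotProduct, Fintype.sum_prod_type, Matrix.one_apply, ite_mul,
        Finset.sum_ite_eq]
    have key : star x ⬝ᵥ (((1 : Matrix κ κ ℂ) ⊗ₖ P) *ᵥ x) =
        ∑ a : κ, star (fun z => x (a, z)) ⬝ᵥ (P *ᵥ fun z => x (a, z)) := by
      rw [dotProduct, Fintype.sum_prod_type]
      refine Finset.sum_congr rfl fun a _ => ?_
      rw [dotProduct]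
      exact Finset.sum_congr rfl fun b _ => by rw [hmv]; rfl
    rw [key]
    obtain ⟨⟨a, b⟩, hab⟩ := Function.ne_iff.mp hx
    refine Finset.sum_pos' (fun c _ => hP.posSemidef.dotProduct_mulVec_nonneg _) ⟨a, Finset.mem_univ a, hP.dotProduct_mulVec_pos ?_⟩
    exact fun hc => hab (congrFun hc b)

lemma ampMat_posDef {n : ℕ} {P : Matrix (Fin n → ι) (Fin n → ι) ℂ} (hP : P.PosDef) :
    (ampMat n P).PosDef := by
  rw [ampMat_eq]
  exact posDef_submatrix_equiv (posDef_one_kron hP) _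

open scoped MatrixOrder in
lemma twistLeg_one_posSemidef {T : Matrix (ι × ι) (ι × ι) ℂ} (hT : T.PosSemidef) (n : ℕ) :
    (twistLeg T (n + 2) 1).PosSemidef := by
  rw [twistLeg_one_eq]
  refine Matrix.PosSemidef.submatrix ?_ _
  have hsq : (CFC.sqrt T ⊗ₖ (1 : Matrix (Fin n → ι) (Fin n → ι) ℂ))ᴴ *
      (CFC.sqrt T ⊗ₖ (1 : Matrix (Fin n → ι) (Fin n → ι) ℂ)) = T ⊗ₖ 1 := by
    rw [kron_conjTranspose, (CFC.sqrt_nonneg T).posSemidef.1.eq, Matrix.conjTranspose_one,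
      ← Matrix.mul_kronecker_mul, CFC.sqrt_mul_sqrt_self T hT.nonneg, one_mul]
  rw [← hsq]
  exact Matrix.posSemidef_conjTranspose_mul_self _

set_option maxHeartbeats 2000000 in
lemma ampMat_twistLeg (T : Matrix (ι × ι) (ι × ι) ℂ) (n j : ℕ) (hj : 1 ≤ j) :
    ampMat (n + 1) (twistLeg T (n + 1) j) = twistLeg T (n + 2) (j + 1) := by
  ext g f
  by_cases hr : j < n + 1
  · have h1 : 1 ≤ j ∧ j < n + 1 := ⟨hj, hr⟩
    have h2 : 1 ≤ j + 1 ∧ j + 1 < n + 2 := ⟨by omega, by omega⟩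
    simp only [ampMat, twistLeg, Matrix.of_apply]
    rw [dif_pos h1, dif_pos h2]
    have hs1 : (Fin.succ (⟨j - 1, by omega⟩ : Fin (n + 1))) = (⟨j + 1 - 1, by omega⟩ : Fin (n + 2)) := by
      simp only [Fin.ext_iff, Fin.val_succ]
      omega
    have hs2 : (Fin.succ (⟨j, h1.2⟩ : Fin (n + 1))) = (⟨j + 1, h2.2⟩ : Fin (n + 2)) := by
      simp only [Fin.ext_iff, Fin.val_succ]
    have hcond : (g 0 = f 0 ∧ ∀ i : Fin (n + 1), i ≠ (⟨j - 1, by omega⟩ : Fin (n + 1)) →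
        i ≠ (⟨j, h1.2⟩ : Fin (n + 1)) → (g ∘ Fin.succ) i = (f ∘ Fin.succ) i) ↔
        (∀ i : Fin (n + 2), i ≠ (⟨j + 1 - 1, by omega⟩ : Fin (n + 2)) →
          i ≠ (⟨j + 1, h2.2⟩ : Fin (n + 2)) → g i = f i) := by
      constructor
      · rintro ⟨h0, hl⟩ i
        refine Fin.cases (fun _ _ => h0) (fun i' hi1 hi2 => ?_) i
        exact hl i' (fun hc => hi1 (by rw [hc, hs1])) (fun hc => hi2 (by rw [hc, hs2]))
      · intro hR
        refine ⟨hR 0 (by simp [Fin.ext_iff]; omega) (by simp [Fin.ext_iff]), fun i e1 e2 => ?_⟩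
        exact hR i.succ (fun hc => e1 (Fin.succ_injective _ (hc.trans hs1.symm)))
          (fun hc => e2 (Fin.succ_injective _ (hc.trans hs2.symm)))
    have hval : T ((g ∘ Fin.succ) ⟨j - 1, by omega⟩, (g ∘ Fin.succ) ⟨j, h1.2⟩)
          ((f ∘ Fin.succ) ⟨j - 1, by omega⟩, (f ∘ Fin.succ) ⟨j, h1.2⟩) =
        T (g ⟨j + 1 - 1, by omega⟩, g ⟨j + 1, h2.2⟩) (f ⟨j + 1 - 1, by omega⟩, f ⟨j + 1, h2.2⟩) := by
      rw [show ((g ∘ Fin.succ) ⟨j - 1, by omega⟩ : ι) = g (Fin.succ ⟨j - 1, by omega⟩) from rfl,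
        show ((g ∘ Fin.succ) ⟨j, h1.2⟩ : ι) = g (Fin.succ ⟨j, h1.2⟩) from rfl,
        show ((f ∘ Fin.succ) ⟨j - 1, by omega⟩ : ι) = f (Fin.succ ⟨j - 1, by omega⟩) from rfl,
        show ((f ∘ Fin.succ) ⟨j, h1.2⟩ : ι) = f (Fin.succ ⟨j, h1.2⟩) from rfl, hs1, hs2]
    by_cases hc : (∀ i : Fin (n + 2), i ≠ (⟨j + 1 - 1, by omega⟩ : Fin (n + 2)) →
        i ≠ (⟨j + 1, h2.2⟩ : Fin (n + 2)) → g i = f i)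
    · obtain ⟨h0, hlp⟩ := hcond.mpr hc
      rw [if_pos h0, if_pos hlp, if_pos hc, hval]
    · rw [if_neg hc]
      by_cases h0 : g 0 = f 0
      · rw [if_pos h0, if_neg (fun hl => hc (hcond.mp ⟨h0, hl⟩))]
      · rw [if_neg h0]
  · have h2 : ¬(1 ≤ j + 1 ∧ j + 1 < n + 2) := by omega
    have h1 : ¬(1 ≤ j ∧ j < n + 1) := by omega
    simp only [ampMat, twistLeg, Matrix.of_apply]
    rw [dif_neg h1, dif_neg h2]
    split_ifs <;> rfl

noncomputable def SMat (T : Matrix (ι × ι) (ι × ι) ℂ) (n : ℕ) :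
    Matrix (Fin (n + 1) → ι) (Fin (n + 1) → ι) ℂ :=
  ∑ k ∈ Finset.range (n + 1), ((List.range k).map (fun j => twistLeg T (n + 1) (j + 1))).prod

lemma tS_succ (T : Matrix (ι × ι) (ι × ι) ℂ) (n : ℕ) :
    twistedSymmetrizer T (n + 1) = ampMat n (twistedSymmetrizer T n) * SMat T n := rfl

lemma prod_shift (T : Matrix (ι × ι) (ι × ι) ℂ) (n k : ℕ) :
    ((List.range k).map (fun j => twistLeg T (n + 2) (j + 2))).prod =
      ampMat (n + 1) (((List.range k).map (fun j => twistLeg T (n + 1) (j + 1))).prod) := by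
  induction k with
  | zero => simp [ampMat_one]
  | succ k ih =>
      rw [List.range_succ, List.map_append, List.prod_append, List.map_append, List.prod_append,
        List.map_singleton, List.map_singleton, List.prod_singleton, List.prod_singleton,
        ih, ← ampMat_twistLeg T n (k + 1) (by omega), ← ampMat_mul]

lemma SMat_succ (T : Matrix (ι × ι) (ι × ι) ℂ) (n : ℕ) :
    SMat T (n + 1) = 1 + twistLeg T (n + 2) 1 * ampMat (n + 1) (SMat T n) := by
  rw [SMat, Finset.sum_range_succ']
  have h0 : ((List.range 0).map (fun j => twistLeg T (n + 2) (j + 1))).prod = 1 := by simp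
  rw [h0]
  have hterm : ∀ k, ((List.range (k + 1)).map (fun j => twistLeg T (n + 2) (j + 1))).prod =
      twistLeg T (n + 2) 1 *
        ampMat (n + 1) (((List.range k).map (fun j => twistLeg T (n + 1) (j + 1))).prod) := by
    intro k
    rw [List.range_succ_eq_map, List.map_cons, List.prod_cons, List.map_map, ← prod_shift]
    rfl
  rw [Finset.sum_congr rfl (fun k _ => hterm k), ← Finset.mul_sum, ← ampMat_sum]
  exact add_comm _ _

lemma key_identity (T : Matrix (ι × ι) (ι × ι) ℂ) (n : ℕ)
    (W : Matrix (Fin n → ι) (Fin n → ι) ℂ) (hW : Wᴴ = W)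
    (hWW : W * W = twistedSymmetrizer T n)
    (hH : (twistedSymmetrizer T (n + 1)).IsHermitian) :
    twistedSymmetrizer T (n + 2) =
      ampMat (n + 1) (twistedSymmetrizer T (n + 1)) +
        (ampMat (n + 1) (ampMat n W) * ampMat (n + 1) (SMat T n))ᴴ * twistLeg T (n + 2) 1 *
          (ampMat (n + 1) (ampMat n W) * ampMat (n + 1) (SMat T n)) := by
  set tL1 := twistLeg T (n + 2) 1 with htL1
  set ampW2 := ampMat (n + 1) (ampMat n W) with hampW2
  set ampS := ampMat (n + 1) (SMat T n) with hampS
  set Pn1 := twistedSymmetrizer T (n + 1) with hPn1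
  have hPn : (twistedSymmetrizer T n)ᴴ = twistedSymmetrizer T n := by
    rw [← hWW, Matrix.conjTranspose_mul, hW]
  have e1 : ampW2ᴴ = ampW2 := by
    rw [hampW2, ampMat_conjTranspose, ampMat_conjTranspose, hW]
  have e2 : (ampMat (n + 1) (ampMat n (twistedSymmetrizer T n)))ᴴ =
      ampMat (n + 1) (ampMat n (twistedSymmetrizer T n)) := by
    rw [ampMat_conjTranspose, ampMat_conjTranspose, hPn]
  have step1 : ampW2ᴴ * tL1 * ampW2 =
      ampMat (n + 1) (ampMat n (twistedSymmetrizer T n)) * tL1 := by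
    rw [e1, mul_assoc, twistLeg_one_comm, ← mul_assoc, hampW2, ← ampMat_mul, ← ampMat_mul, hWW]
  have hcomb : ampSᴴ * ampMat (n + 1) (ampMat n (twistedSymmetrizer T n)) =
      ampMat (n + 1) Pn1 := by
    rw [← e2, ← Matrix.conjTranspose_mul, ← ampMat_mul, ← tS_succ, ← hPn1,
      ampMat_conjTranspose, hH.eq]
  have step2 : (ampW2 * ampS)ᴴ * tL1 * (ampW2 * ampS) =
      ampMat (n + 1) Pn1 * (tL1 * ampS) := by
    rw [Matrix.conjTranspose_mul]
    calc ampSᴴ * ampW2ᴴ * tL1 * (ampW2 * ampS)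
        = ampSᴴ * (ampW2ᴴ * tL1 * ampW2) * ampS := by simp only [mul_assoc]
      _ = ampSᴴ * (ampMat (n + 1) (ampMat n (twistedSymmetrizer T n)) * tL1) * ampS := by
          rw [step1]
      _ = (ampSᴴ * ampMat (n + 1) (ampMat n (twistedSymmetrizer T n))) * (tL1 * ampS) := by
          simp only [mul_assoc]
      _ = ampMat (n + 1) Pn1 * (tL1 * ampS) := by rw [hcomb]
  rw [step2, show twistedSymmetrizer T (n + 2) = ampMat (n + 1) Pn1 * SMat T (n + 1) from rfl,
    SMat_succ, mul_add, mul_one, ← hampS]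

open scoped MatrixOrder in
theorem main {T : Matrix (ι × ι) (ι × ι) ℂ} (hT : T.PosSemidef) :
    ∀ n : ℕ, (twistedSymmetrizer T n).PosDef := by
  have main2 : ∀ n : ℕ, (twistedSymmetrizer T n).PosDef ∧
      (twistedSymmetrizer T (n + 1)).PosDef := by
    intro n
    induction n with
    | zero =>
        have h0 : (twistedSymmetrizer T 0).PosDef := Matrix.PosDef.one
        refine ⟨h0, ?_⟩
        have hS : SMat T 0 = 1 := by simp [SMat]
        rw [tS_succ, hS, show twistedSymmetrizer T 0 = 1 from rfl, ampMat_one, one_mul]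
        exact Matrix.PosDef.one
    | succ n ih =>
        refine ⟨ih.2, ?_⟩
        have hsq := ih.1.posSemidef
        rw [key_identity T n (CFC.sqrt _) (CFC.sqrt_nonneg _).posSemidef.1.eq (CFC.sqrt_mul_sqrt_self _ hsq.nonneg) ih.2.1]
        exact (ampMat_posDef ih.2).add_posSemidef
          ((twistLeg_one_posSemidef hT n).conjTranspose_mul_mul_same _)
  exact fun n => (main2 n).1

end TwistAux

/-- a positive semidefinite `T` with operator norm at most `1` is a strict twist:
all twisted symmetrizers `P_{T,n}` are positive definite. -/
theorem twistedSymmetrizer_posDef_of_posSemidef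
    {ι : Type*} [Fintype ι] [DecidableEq ι] [Nonempty ι]
    (T : Matrix (ι × ι) (ι × ι) ℂ) (hT : T.PosSemidef)
    (hnorm : ‖Matrix.toEuclideanCLM (𝕜 := ℂ) T‖ ≤ 1) :
    ∀ n : ℕ, (twistedSymmetrizer T n).PosDef :=
  TwistAux.main hT
end

section
/- Let ι be a nonempty finite type and T : Matrix (ι × ι) (ι × ι) ℂ a matrix satisfying the Yang–Baxter equation T_1 * T_2 * T_1 = T_2 * T_1 * T_2 on (Fin 3 → ι). Then the twisted symmetrizers defined by the left recursion P_{T,1} = 1, P_{T,n+1} = E_n(P_{T,n}) * (1 + T_1 + T_1*T_2 + ⋯ + T_1*⋯*T_n) also satisfy the right recursion relation P_{T,n+1} = F_n(P_{T,n}) * (1 + T_n + T_n*T_{n−1} + ⋯ + T_n*⋯*T_1), where F_n(P) acts as P on the first n coordinates and as the identity on the last coordinate. -/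
open scoped ComplexOrder
/-- The ampliation `F_n(P)` acting as `P` on the first `n` coordinates and as the identity on
the last coordinate. -/
def lastAmpMat {ι : Type*} [DecidableEq ι] (n : ℕ) (P : Matrix (Fin n → ι) (Fin n → ι) ℂ) :
    Matrix (Fin (n + 1) → ι) (Fin (n + 1) → ι) ℂ :=
  Matrix.of fun g f =>
    if g (Fin.last n) = f (Fin.last n) then P (g ∘ Fin.castSucc) (f ∘ Fin.castSucc) else 0

section TwistAux
variable {ι : Type*} [Fintype ι] [DecidableEq ι] (T : Matrix (ι × ι) (ι × ι) ℂ)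

lemma twistLeg_apply_valid {N k : ℕ} (h1 : 1 ≤ k) (h2 : k < N) (g f : Fin N → ι) :
    twistLeg T N k g f =
      if ∀ l : Fin N, l ≠ ⟨k - 1, by omega⟩ → l ≠ ⟨k, h2⟩ → g l = f l then
        T (g ⟨k - 1, by omega⟩, g ⟨k, h2⟩) (f ⟨k - 1, by omega⟩, f ⟨k, h2⟩) else 0 := by
  simp only [twistLeg, Matrix.of_apply, dif_pos (show 1 ≤ k ∧ k < N from ⟨h1, h2⟩)]

lemma twistLeg_invalid {N k : ℕ} (h : ¬(1 ≤ k ∧ k < N)) : twistLeg T N k = 0 := by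
  ext g f; simp [twistLeg, h]

lemma sum_localize {N : ℕ} (i j : Fin N) (hij : i ≠ j) (g : Fin N → ι)
    (F : (Fin N → ι) → ℂ)
    (hF : ∀ h, ¬(∀ l, l ≠ i → l ≠ j → g l = h l) → F h = 0) :
    ∑ h, F h = ∑ x, ∑ y, F (Function.update (Function.update g i x) j y) := by
  classical
  set e : ι × ι → (Fin N → ι) := fun p => Function.update (Function.update g i p.1) j p.2 with he
  have hei : ∀ p, e p i = p.1 := by
    intro p; simp [he, Function.update_of_ne hij, Function.update_self]
  have hej : ∀ p, e p j = p.2 := by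
    intro p; simp [he, Function.update_self]
  have hrepr : ∀ h : Fin N → ι, (∀ l, l ≠ i → l ≠ j → g l = h l) → h = e (h i, h j) := by
    intro h hcond; funext l
    by_cases hlj : l = j
    · subst hlj; simp [he, Function.update_self]
    · by_cases hli : l = i
      · subst hli; simp [he, Function.update_of_ne hlj, Function.update_self]
      · simp [he, Function.update_of_ne hlj, Function.update_of_ne hli, (hcond l hli hlj).symm]
  have hinj : ∀ p ∈ Finset.univ, ∀ q ∈ Finset.univ, e p = e q → (p : ι × ι) = q := by
    intro p _ q _ hpq
    have h1 := congrFun hpq i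
    have h2 := congrFun hpq j
    rw [hei, hei] at h1; rw [hej, hej] at h2
    exact Prod.ext h1 h2
  calc ∑ h, F h = ∑ p ∈ Finset.univ.image e, F p := by
        apply (Finset.sum_subset (Finset.subset_univ _) _).symm
        intro h _ hnot
        apply hF
        intro hcond
        exact hnot (Finset.mem_image.2 ⟨(h i, h j), Finset.mem_univ _, (hrepr h hcond).symm⟩)
    _ = ∑ p : ι × ι, F (e p) := Finset.sum_image hinj
    _ = ∑ x, ∑ y, F (e (x, y)) := Fintype.sum_prod_type _
lemma fin_ne_of_val_ne {N : ℕ} {a b : ℕ} (h : a ≠ b) (ha : a < N) (hb : b < N) :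
    (⟨a, ha⟩ : Fin N) ≠ ⟨b, hb⟩ := by simp [Fin.ext_iff]; omega

lemma twistLeg_mul_apply {N k : ℕ} (h1 : 1 ≤ k) (h2 : k < N)
    (M : Matrix (Fin N → ι) (Fin N → ι) ℂ) (g f : Fin N → ι) :
    (twistLeg T N k * M) g f =
      ∑ x, ∑ y, T (g ⟨k - 1, by omega⟩, g ⟨k, h2⟩) (x, y) *
        M (Function.update (Function.update g ⟨k - 1, by omega⟩ x) ⟨k, h2⟩ y) f := by
  have hij : (⟨k - 1, by omega⟩ : Fin N) ≠ ⟨k, h2⟩ := fin_ne_of_val_ne (by omega) _ _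
  rw [Matrix.mul_apply,
    sum_localize (⟨k - 1, by omega⟩ : Fin N) ⟨k, h2⟩ hij g
      (fun h => twistLeg T N k g h * M h f)
      (by
        intro h hcond
        show twistLeg T N k g h * M h f = 0
        rw [twistLeg_apply_valid T h1 h2, if_neg hcond, zero_mul])]
  apply Finset.sum_congr rfl; intro x _
  apply Finset.sum_congr rfl; intro y _
  congr 1
  rw [twistLeg_apply_valid T h1 h2, if_pos]
  · rw [Function.update_self, Function.update_of_ne hij, Function.update_self]
  · intro l hli hlj
    rw [Function.update_of_ne hlj, Function.update_of_ne hli]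

lemma mul_twistLeg_apply {N k : ℕ} (h1 : 1 ≤ k) (h2 : k < N)
    (M : Matrix (Fin N → ι) (Fin N → ι) ℂ) (g f : Fin N → ι) :
    (M * twistLeg T N k) g f =
      ∑ x, ∑ y, M g (Function.update (Function.update f ⟨k - 1, by omega⟩ x) ⟨k, h2⟩ y) *
        T (x, y) (f ⟨k - 1, by omega⟩, f ⟨k, h2⟩) := by
  have hij : (⟨k - 1, by omega⟩ : Fin N) ≠ ⟨k, h2⟩ := fin_ne_of_val_ne (by omega) _ _
  rw [Matrix.mul_apply,
    sum_localize (⟨k - 1, by omega⟩ : Fin N) ⟨k, h2⟩ hij f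
      (fun h => M g h * twistLeg T N k h f)
      (by
        intro h hcond
        show M g h * twistLeg T N k h f = 0
        rw [twistLeg_apply_valid T h1 h2, if_neg, mul_zero]
        intro hc; exact hcond fun l hli hlj => (hc l hli hlj).symm)]
  apply Finset.sum_congr rfl; intro x _
  apply Finset.sum_congr rfl; intro y _
  congr 1
  rw [twistLeg_apply_valid T h1 h2, if_pos]
  · rw [Function.update_self, Function.update_of_ne hij, Function.update_self]
  · intro l hli hlj
    rw [Function.update_of_ne hlj, Function.update_of_ne hli]
lemma triple_left {N a : ℕ} (ha : 1 ≤ a) (haN : a + 1 < N) (g f : Fin N → ι) :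
    (twistLeg T N a * (twistLeg T N (a + 1) * twistLeg T N a)) g f =
      if ∀ l : Fin N, l ≠ ⟨a - 1, by omega⟩ → l ≠ ⟨a, by omega⟩ → l ≠ ⟨a + 1, haN⟩ →
          g l = f l then
        ∑ x, ∑ y, ∑ u,
          T (g ⟨a - 1, by omega⟩, g ⟨a, by omega⟩) (x, y) *
            T (y, g ⟨a + 1, haN⟩) (u, f ⟨a + 1, haN⟩) *
              T (x, u) (f ⟨a - 1, by omega⟩, f ⟨a, by omega⟩)
      else 0 := by
  have pi : a - 1 < N := by omega
  have pj : a < N := by omega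
  have hij : (⟨a - 1, pi⟩ : Fin N) ≠ ⟨a, pj⟩ := fin_ne_of_val_ne (by omega) _ _
  have him : (⟨a - 1, pi⟩ : Fin N) ≠ ⟨a + 1, haN⟩ := fin_ne_of_val_ne (by omega) _ _
  have hjm : (⟨a, pj⟩ : Fin N) ≠ ⟨a + 1, haN⟩ := fin_ne_of_val_ne (by omega) _ _
  rw [twistLeg_mul_apply T ha pj]
  simp only [twistLeg_mul_apply T (Nat.le_add_left 1 a) haN, Nat.add_sub_cancel]
  simp only [twistLeg_apply_valid T ha pj]
  simp only [Function.update_self, Function.update_of_ne hij, Function.update_of_ne him,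
    Function.update_of_ne hjm, Function.update_of_ne hij.symm, Function.update_of_ne him.symm,
    Function.update_of_ne hjm.symm]
  have hm1 : (⟨a + 1 - 1, by omega⟩ : Fin N) = ⟨a, pj⟩ := by simp [Fin.ext_iff]
  simp only [hm1, Function.update_self, Function.update_idem]
  by_cases hOC : ∀ l : Fin N, l ≠ ⟨a - 1, pi⟩ → l ≠ ⟨a, pj⟩ → l ≠ ⟨a + 1, haN⟩ → g l = f l
  · rw [if_pos hOC]
    have hC : ∀ x u v : ι,
        (∀ l : Fin N, l ≠ ⟨a - 1, pi⟩ → l ≠ ⟨a, pj⟩ →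
          Function.update (Function.update (Function.update g ⟨a - 1, pi⟩ x) ⟨a, pj⟩ u)
            ⟨a + 1, haN⟩ v l = f l) ↔ v = f ⟨a + 1, haN⟩ := by
      intro x u v; constructor
      · intro h
        have := h ⟨a + 1, haN⟩ him.symm hjm.symm
        rwa [Function.update_self] at this
      · intro hv l hli hlj
        by_cases hlm : l = ⟨a + 1, haN⟩
        · subst hlm; rw [Function.update_self]; exact hv
        · rw [Function.update_of_ne hlm, Function.update_of_ne hlj, Function.update_of_ne hli]
          exact hOC l hli hlj hlm
    simp only [hC]
    simp only [mul_ite, mul_zero, Finset.sum_ite_eq', Finset.mem_univ, if_true]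
    simp only [Finset.mul_sum, mul_assoc]
  · rw [if_neg hOC]
    have hC0 : ∀ x u v : ι,
        ¬ (∀ l : Fin N, l ≠ ⟨a - 1, pi⟩ → l ≠ ⟨a, pj⟩ →
          Function.update (Function.update (Function.update g ⟨a - 1, pi⟩ x) ⟨a, pj⟩ u)
            ⟨a + 1, haN⟩ v l = f l) := by
      intro x u v hc
      apply hOC
      intro l h1 h2 h3
      have := hc l h1 h2
      rwa [Function.update_of_ne h3, Function.update_of_ne h2, Function.update_of_ne h1] at this
    simp only [hC0, if_false, mul_zero, Finset.sum_const_zero]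
lemma sum_sum_ite_left (c : ι) (G : ι → ι → ℂ) :
    (∑ u : ι, ∑ v : ι, if u = c then G u v else 0) = ∑ v : ι, G c v := by
  rw [Finset.sum_comm]; simp

lemma triple_right {N a : ℕ} (ha : 1 ≤ a) (haN : a + 1 < N) (g f : Fin N → ι) :
    (twistLeg T N (a + 1) * (twistLeg T N a * twistLeg T N (a + 1))) g f =
      if ∀ l : Fin N, l ≠ ⟨a - 1, by omega⟩ → l ≠ ⟨a, by omega⟩ → l ≠ ⟨a + 1, haN⟩ →
          g l = f l then
        ∑ x, ∑ y, ∑ v,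
          T (g ⟨a, by omega⟩, g ⟨a + 1, haN⟩) (x, y) *
            (T (g ⟨a - 1, by omega⟩, x) (f ⟨a - 1, by omega⟩, v) *
              T (v, y) (f ⟨a, by omega⟩, f ⟨a + 1, haN⟩))
      else 0 := by
  have pi : a - 1 < N := by omega
  have pj : a < N := by omega
  have hij : (⟨a - 1, pi⟩ : Fin N) ≠ ⟨a, pj⟩ := fin_ne_of_val_ne (by omega) _ _
  have him : (⟨a - 1, pi⟩ : Fin N) ≠ ⟨a + 1, haN⟩ := fin_ne_of_val_ne (by omega) _ _
  have hjm : (⟨a, pj⟩ : Fin N) ≠ ⟨a + 1, haN⟩ := fin_ne_of_val_ne (by omega) _ _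
  rw [twistLeg_mul_apply T (Nat.le_add_left 1 a) haN]
  simp only [twistLeg_mul_apply T ha pj]
  simp only [twistLeg_apply_valid T (Nat.le_add_left 1 a) haN]
  simp only [Function.update_self, Function.update_of_ne hij, Function.update_of_ne him,
    Function.update_of_ne hjm, Function.update_of_ne hij.symm, Function.update_of_ne him.symm,
    Function.update_of_ne hjm.symm]
  have hm1 : (⟨a + 1 - 1, by omega⟩ : Fin N) = ⟨a, pj⟩ := by simp [Fin.ext_iff]
  have e0 : ∀ h : Fin N → ι, h (⟨a + 1 - 1, by omega⟩ : Fin N) = h ⟨a, pj⟩ := fun h => by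
    rw [hm1]
  have e1 : ∀ (h : Fin N → ι) (x : ι),
      Function.update h (⟨a + 1 - 1, by omega⟩ : Fin N) x = Function.update h ⟨a, pj⟩ x :=
    fun h x => by rw [hm1]
  simp only [hm1, e0, e1]
  simp only [Function.update_self, Function.update_of_ne hij, Function.update_of_ne him,
    Function.update_of_ne hjm, Function.update_of_ne hij.symm, Function.update_of_ne him.symm,
    Function.update_of_ne hjm.symm]
  by_cases hOC : ∀ l : Fin N, l ≠ ⟨a - 1, pi⟩ → l ≠ ⟨a, pj⟩ → l ≠ ⟨a + 1, haN⟩ → g l = f l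
  · rw [if_pos hOC]
    have hC : ∀ x x1 x2 x3 : ι,
        (∀ l : Fin N, l ≠ ⟨a, pj⟩ → l ≠ ⟨a + 1, haN⟩ →
          Function.update (Function.update (Function.update (Function.update g ⟨a, pj⟩ x)
            ⟨a + 1, haN⟩ x1) ⟨a - 1, pi⟩ x2) ⟨a, pj⟩ x3 l = f l) ↔ x2 = f ⟨a - 1, pi⟩ := by
      intro x x1 x2 x3; constructor
      · intro h
        have := h ⟨a - 1, pi⟩ hij him
        rwa [Function.update_of_ne hij, Function.update_self] at this
      · intro hv l hlj hlm
        by_cases hli : l = ⟨a - 1, pi⟩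
        · subst hli
          rw [Function.update_of_ne hij, Function.update_self]; exact hv
        · rw [Function.update_of_ne hlj, Function.update_of_ne hli,
            Function.update_of_ne hlm, Function.update_of_ne hlj]
          exact hOC l hli hlj hlm
    simp only [hC]
    simp only [mul_ite, mul_zero]
    simp only [sum_sum_ite_left]
    simp only [Finset.mul_sum]
  · rw [if_neg hOC]
    have hC0 : ∀ x x1 x2 x3 : ι,
        ¬ (∀ l : Fin N, l ≠ ⟨a, pj⟩ → l ≠ ⟨a + 1, haN⟩ →
          Function.update (Function.update (Function.update (Function.update g ⟨a, pj⟩ x)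
            ⟨a + 1, haN⟩ x1) ⟨a - 1, pi⟩ x2) ⟨a, pj⟩ x3 l = f l) := by
      intro x x1 x2 x3 hc
      apply hOC
      intro l h1 h2 h3
      have := hc l h2 h3
      rwa [Function.update_of_ne h2, Function.update_of_ne h1,
        Function.update_of_ne h3, Function.update_of_ne h2] at this
    simp only [hC0, if_false, mul_zero, Finset.sum_const_zero]
lemma scalarYBE
    (hYBE : twistLeg T 3 1 * twistLeg T 3 2 * twistLeg T 3 1 =
      twistLeg T 3 2 * twistLeg T 3 1 * twistLeg T 3 2)
    (p q r p' q' r' : ι) :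
    (∑ x, ∑ y, ∑ u, T (p, q) (x, y) * T (y, r) (u, r') * T (x, u) (p', q')) =
      ∑ x, ∑ y, ∑ v, T (q, r) (x, y) * (T (p, x) (p', v) * T (v, y) (q', r')) := by
  rw [mul_assoc, mul_assoc] at hYBE
  have h := congrFun (congrFun hYBE ![p, q, r]) ![p', q', r']
  rw [triple_left T (le_refl 1) (by norm_num) _ _,
    triple_right T (le_refl 1) (by norm_num) _ _] at h
  have hcond : ∀ l : Fin 3, l ≠ (⟨1 - 1, by omega⟩ : Fin 3) → l ≠ ⟨1, by omega⟩ →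
      l ≠ ⟨1 + 1, by norm_num⟩ → (![p, q, r]) l = (![p', q', r']) l := by
    intro l h1 h2 h3
    exfalso
    rcases l with ⟨v, hv⟩
    simp [Fin.ext_iff] at h1 h2 h3
    omega
  rw [if_pos hcond, if_pos hcond] at h
  have i0 : (⟨1 - 1, by omega⟩ : Fin 3) = 0 := rfl
  have i1 : (⟨1, by omega⟩ : Fin 3) = 1 := rfl
  have i2 : (⟨1 + 1, by norm_num⟩ : Fin 3) = 2 := rfl
  simpa only [i0, i1, i2, Matrix.cons_val_zero, Matrix.cons_val_one, Matrix.head_cons,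
    Matrix.cons_val_two, Matrix.tail_cons] using h

lemma twistLeg_braid
    (hYBE : twistLeg T 3 1 * twistLeg T 3 2 * twistLeg T 3 1 =
      twistLeg T 3 2 * twistLeg T 3 1 * twistLeg T 3 2)
    {N a : ℕ} :
    twistLeg T N a * twistLeg T N (a + 1) * twistLeg T N a =
      twistLeg T N (a + 1) * twistLeg T N a * twistLeg T N (a + 1) := by
  by_cases h : 1 ≤ a ∧ a + 1 < N
  · ext g f
    rw [mul_assoc, mul_assoc, triple_left T h.1 h.2 g f, triple_right T h.1 h.2 g f]
    split_ifs with hOC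
    · exact scalarYBE T hYBE _ _ _ _ _ _
    · rfl
  · rcases not_and_or.mp h with h | h
    · have h0 : twistLeg T N a = 0 := twistLeg_invalid T fun hc => h hc.1
      simp [h0]
    · have h0 : twistLeg T N (a + 1) = 0 := twistLeg_invalid T fun hc => h (by omega)
      simp [h0]
lemma sum_sum_ite_both (c d : ι) (F : ι → ι → ℂ) (V : ℂ) :
    (∑ x : ι, ∑ y : ι, F x y * if x = c ∧ y = d then V else 0) = F c d * V := by
  calc (∑ x : ι, ∑ y : ι, F x y * if x = c ∧ y = d then V else 0)
      = ∑ x : ι, if x = c then F x d * V else 0 := Finset.sum_congr rfl fun x _ => by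
        by_cases hx : x = c
        · simp [hx, mul_ite, mul_zero]
        · simp [hx]
    _ = F c d * V := by simp

lemma twistLeg_comm {N a b : ℕ} (hab : a + 2 ≤ b) :
    twistLeg T N a * twistLeg T N b = twistLeg T N b * twistLeg T N a := by
  by_cases ha : 1 ≤ a ∧ a < N
  swap
  · rw [twistLeg_invalid T ha, zero_mul, mul_zero]
  by_cases hb : 1 ≤ b ∧ b < N
  swap
  · rw [twistLeg_invalid T hb, zero_mul, mul_zero]
  have pi : a - 1 < N := by omega
  have pj : a < N := ha.2
  have pp : b - 1 < N := by omega
  have pq : b < N := hb.2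
  have hij : (⟨a - 1, pi⟩ : Fin N) ≠ ⟨a, pj⟩ := fin_ne_of_val_ne (by omega) _ _
  have hip : (⟨a - 1, pi⟩ : Fin N) ≠ ⟨b - 1, pp⟩ := fin_ne_of_val_ne (by omega) _ _
  have hiq : (⟨a - 1, pi⟩ : Fin N) ≠ ⟨b, pq⟩ := fin_ne_of_val_ne (by omega) _ _
  have hjp : (⟨a, pj⟩ : Fin N) ≠ ⟨b - 1, pp⟩ := fin_ne_of_val_ne (by omega) _ _
  have hjq : (⟨a, pj⟩ : Fin N) ≠ ⟨b, pq⟩ := fin_ne_of_val_ne (by omega) _ _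
  have hpq : (⟨b - 1, pp⟩ : Fin N) ≠ ⟨b, pq⟩ := fin_ne_of_val_ne (by omega) _ _
  ext g f
  rw [twistLeg_mul_apply T ha.1 pj, twistLeg_mul_apply T hb.1 pq]
  simp only [twistLeg_apply_valid T hb.1 pq, twistLeg_apply_valid T ha.1 pj]
  simp only [Function.update_self, Function.update_of_ne hij, Function.update_of_ne hip,
    Function.update_of_ne hiq, Function.update_of_ne hjp, Function.update_of_ne hjq,
    Function.update_of_ne hpq, Function.update_of_ne hij.symm, Function.update_of_ne hip.symm,
    Function.update_of_ne hiq.symm, Function.update_of_ne hjp.symm,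
    Function.update_of_ne hjq.symm, Function.update_of_ne hpq.symm]
  by_cases hOC : ∀ l : Fin N, l ≠ ⟨a - 1, pi⟩ → l ≠ ⟨a, pj⟩ → l ≠ ⟨b - 1, pp⟩ →
      l ≠ ⟨b, pq⟩ → g l = f l
  · have hC1 : ∀ x y : ι,
        (∀ l : Fin N, l ≠ ⟨b - 1, pp⟩ → l ≠ ⟨b, pq⟩ →
          Function.update (Function.update g ⟨a - 1, pi⟩ x) ⟨a, pj⟩ y l = f l) ↔
        (x = f ⟨a - 1, pi⟩ ∧ y = f ⟨a, pj⟩) := by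
      intro x y; constructor
      · intro h
        refine ⟨?_, ?_⟩
        · have := h ⟨a - 1, pi⟩ hip hiq
          rwa [Function.update_of_ne hij, Function.update_self] at this
        · have := h ⟨a, pj⟩ hjp hjq
          rwa [Function.update_self] at this
      · rintro ⟨hx, hy⟩ l hlp hlq
        by_cases hlj : l = ⟨a, pj⟩
        · subst hlj; rwa [Function.update_self]
        by_cases hli : l = ⟨a - 1, pi⟩
        · subst hli; rwa [Function.update_of_ne hij, Function.update_self]
        rw [Function.update_of_ne hlj, Function.update_of_ne hli]
        exact hOC l hli hlj hlp hlq
    have hC2 : ∀ x y : ι,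
        (∀ l : Fin N, l ≠ ⟨a - 1, pi⟩ → l ≠ ⟨a, pj⟩ →
          Function.update (Function.update g ⟨b - 1, pp⟩ x) ⟨b, pq⟩ y l = f l) ↔
        (x = f ⟨b - 1, pp⟩ ∧ y = f ⟨b, pq⟩) := by
      intro x y; constructor
      · intro h
        refine ⟨?_, ?_⟩
        · have := h ⟨b - 1, pp⟩ hip.symm hjp.symm
          rwa [Function.update_of_ne hpq, Function.update_self] at this
        · have := h ⟨b, pq⟩ hiq.symm hjq.symm
          rwa [Function.update_self] at this
      · rintro ⟨hx, hy⟩ l hli hlj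
        by_cases hlq : l = ⟨b, pq⟩
        · subst hlq; rwa [Function.update_self]
        by_cases hlp : l = ⟨b - 1, pp⟩
        · subst hlp; rwa [Function.update_of_ne hpq, Function.update_self]
        rw [Function.update_of_ne hlq, Function.update_of_ne hlp]
        exact hOC l hli hlj hlp hlq
    simp only [hC1, hC2, sum_sum_ite_both]
    ring
  · have hC1 : ∀ x y : ι,
        ¬ (∀ l : Fin N, l ≠ ⟨b - 1, pp⟩ → l ≠ ⟨b, pq⟩ →
          Function.update (Function.update g ⟨a - 1, pi⟩ x) ⟨a, pj⟩ y l = f l) := by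
      intro x y hc
      apply hOC
      intro l h1 h2 h3 h4
      have := hc l h3 h4
      rwa [Function.update_of_ne h2, Function.update_of_ne h1] at this
    have hC2 : ∀ x y : ι,
        ¬ (∀ l : Fin N, l ≠ ⟨a - 1, pi⟩ → l ≠ ⟨a, pj⟩ →
          Function.update (Function.update g ⟨b - 1, pp⟩ x) ⟨b, pq⟩ y l = f l) := by
      intro x y hc
      apply hOC
      intro l h1 h2 h3 h4
      have := hc l h1 h2
      rwa [Function.update_of_ne h4, Function.update_of_ne h3] at this
    simp only [hC1, hC2, if_false, mul_zero, Finset.sum_const_zero]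
/-- ascending word `T_1 T_2 ⋯ T_t` -/
noncomputable def ascW (N t : ℕ) : Matrix (Fin N → ι) (Fin N → ι) ℂ :=
  ((List.range t).map (fun j => twistLeg T N (j + 1))).prod

/-- descending word `T_m T_{m-1} ⋯ T_{m-t+1}` -/
noncomputable def descW (N m t : ℕ) : Matrix (Fin N → ι) (Fin N → ι) ℂ :=
  ((List.range t).map (fun j => twistLeg T N (m - j))).prod

lemma ascW_zero {N : ℕ} : ascW T N 0 = 1 := rfl

lemma descW_zero {N m : ℕ} : descW T N m 0 = 1 := rfl

lemma ascW_succ {N t : ℕ} : ascW T N (t + 1) = ascW T N t * twistLeg T N (t + 1) := by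
  simp [ascW, List.range_succ]

lemma descW_succ {N m t : ℕ} :
    descW T N m (t + 1) = descW T N m t * twistLeg T N (m - t) := by
  simp [descW, List.range_succ]

lemma commute_tw_ascW {N c t : ℕ} (h : t + 2 ≤ c) :
    Commute (twistLeg T N c) (ascW T N t) := by
  apply Commute.list_prod_right
  intro x hx
  simp only [List.mem_map, List.mem_range] at hx
  obtain ⟨j, hj, rfl⟩ := hx
  exact (twistLeg_comm T (by omega)).symm

lemma commute_tw_descW {N c m t : ℕ} (h : c + t + 1 ≤ m) :
    Commute (twistLeg T N c) (descW T N m t) := by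
  apply Commute.list_prod_right
  intro x hx
  simp only [List.mem_map, List.mem_range] at hx
  obtain ⟨j, hj, rfl⟩ := hx
  exact twistLeg_comm T (a := c) (b := m - j) (by omega)

lemma commute_descW_ascW {N m j k : ℕ} (h : j + k + 1 ≤ m) :
    descW T N m j * ascW T N k = ascW T N k * descW T N m j := by
  apply Commute.list_prod_left
  intro x hx
  simp only [List.mem_map, List.mem_range] at hx
  obtain ⟨t, ht, rfl⟩ := hx
  exact commute_tw_ascW T (by omega)

lemma tw_mul_ascW
    (hYBE : twistLeg T 3 1 * twistLeg T 3 2 * twistLeg T 3 1 =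
      twistLeg T 3 2 * twistLeg T 3 1 * twistLeg T 3 2)
    {N i k : ℕ} (h2 : 2 ≤ i) (hk : i ≤ k) :
    twistLeg T N i * ascW T N k = ascW T N k * twistLeg T N (i - 1) := by
  induction k with
  | zero => omega
  | succ k ih =>
    rcases Nat.lt_or_ge i (k + 1) with hik | hik
    · -- i ≤ k, use ih then commute
      rw [ascW_succ, ← mul_assoc, ih (by omega), mul_assoc,
        twistLeg_comm T (a := i - 1) (b := k + 1) (by omega), ← mul_assoc]
    · -- i = k + 1
      have hi : i = k + 1 := by omega
      subst hi
      have e1 : k + 1 - 1 = k := by omega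
      have e2 : k - 1 + 1 = k := by omega
      rw [e1]
      -- ascW (k+1) = ascW (k-1) * tw k * tw (k+1)
      have hsplit : ascW T N (k + 1) = ascW T N (k - 1) * twistLeg T N k * twistLeg T N (k + 1) := by
        conv_lhs => rw [ascW_succ, show k = k - 1 + 1 from e2.symm]
        rw [ascW_succ, e2]
      rw [hsplit, ← mul_assoc, ← mul_assoc,
        ((commute_tw_ascW T (show (k - 1) + 2 ≤ k + 1 by omega)).eq : twistLeg T N (k+1) * ascW T N (k-1) = _)]
      -- now: ascW (k-1) * tw (k+1) * tw k * tw (k+1) = ascW (k-1) * tw k * tw (k+1) * tw k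
      have hbraid : twistLeg T N (k + 1) * twistLeg T N k * twistLeg T N (k + 1)
          = twistLeg T N k * twistLeg T N (k + 1) * twistLeg T N k := by
        have := twistLeg_braid T hYBE (N := N) (a := k)
        rw [show k + 1 = k - 1 + 1 + 1 from by omega] at this ⊢
        rw [show k = k - 1 + 1 from by omega] at this ⊢
        exact this.symm
      rw [mul_assoc, mul_assoc, ← mul_assoc (twistLeg T N (k+1)), hbraid]
      simp only [mul_assoc]
lemma desc_mul_asc
    (hYBE : twistLeg T 3 1 * twistLeg T 3 2 * twistLeg T 3 1 =
      twistLeg T 3 2 * twistLeg T 3 1 * twistLeg T 3 2)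
    {N m : ℕ} :
    ∀ j k : ℕ, m ≤ j + k → j + 1 ≤ m → 1 ≤ k → k ≤ m →
      descW T N m j * ascW T N k = ascW T N (k - 1) * descW T N m (j + 1) := by
  intro j
  induction j with
  | zero =>
    intro k h1 h2 h3 h4
    have hk : k = m := by omega
    subst hk
    rw [descW_zero, one_mul, descW_succ, descW_zero, one_mul]
    conv_lhs => rw [show k = (k - 1) + 1 from by omega, ascW_succ,
      show k - 1 + 1 = k - 0 from by omega]
  | succ j ih =>
    intro k h1 h2 h3 h4
    rw [descW_succ]
    rcases Nat.lt_or_ge k (m - j) with hk | hk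
    · -- boundary: k = m - j - 1
      have hmj : m - j = k + 1 := by omega
      have hmj1 : m - (j + 1) = k := by omega
      rw [hmj, mul_assoc]
      have step1 : twistLeg T N (k + 1) * ascW T N k
          = ascW T N (k - 1) * (twistLeg T N (k + 1) * twistLeg T N k) := by
        conv_lhs => rw [show k = (k - 1) + 1 from by omega, ascW_succ,
          show k - 1 + 1 = k from by omega]
        rw [← mul_assoc, (commute_tw_ascW T (show (k - 1) + 2 ≤ k + 1 from by omega)).eq,
          mul_assoc]
      rw [step1, ← mul_assoc,
        commute_descW_ascW T (show j + (k - 1) + 1 ≤ m from by omega)]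
      conv_rhs => rw [descW_succ, descW_succ, hmj, hmj1]
      simp only [mul_assoc]
    · -- overlap: use tw_mul_ascW then ih
      have h2m : 2 ≤ m - j := by omega
      rw [mul_assoc, tw_mul_ascW T hYBE h2m (by omega), ← mul_assoc,
        ih k (by omega) (by omega) h3 h4]
      conv_rhs => rw [descW_succ, show m - (j + 1) = m - j - 1 from by omega]
      simp only [mul_assoc]

lemma key_identity
    (hYBE : twistLeg T 3 1 * twistLeg T 3 2 * twistLeg T 3 1 =
      twistLeg T 3 2 * twistLeg T 3 1 * twistLeg T 3 2)
    {N m : ℕ} (hm : 1 ≤ m) :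
    (∑ j ∈ Finset.range m, descW T N m j) * (∑ k ∈ Finset.range (m + 1), ascW T N k)
      = (∑ k ∈ Finset.range m, ascW T N k) * (∑ j ∈ Finset.range (m + 1), descW T N m j) := by
  rw [Finset.sum_mul_sum, Finset.sum_mul_sum]
  rw [← Finset.sum_product', ← Finset.sum_product']
  refine Finset.sum_nbij'
    (fun p => if p.1 + p.2 + 1 ≤ m then (p.2, p.1) else (p.2 - 1, p.1 + 1))
    (fun p => if p.1 + p.2 + 1 ≤ m then (p.2, p.1) else (p.2 - 1, p.1 + 1)) ?_ ?_ ?_ ?_ ?_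
  · rintro ⟨j, k⟩ hp
    simp only [Finset.mem_product, Finset.mem_range] at hp
    by_cases h : j + k + 1 ≤ m
    · simp only [if_pos h, Finset.mem_product, Finset.mem_range]
      exact ⟨by omega, by omega⟩
    · simp only [if_neg h, Finset.mem_product, Finset.mem_range]
      exact ⟨by omega, by omega⟩
  · rintro ⟨k, j⟩ hp
    simp only [Finset.mem_product, Finset.mem_range] at hp
    by_cases h : k + j + 1 ≤ m
    · simp only [if_pos h, Finset.mem_product, Finset.mem_range]
      exact ⟨by omega, by omega⟩
    · simp only [if_neg h, Finset.mem_product, Finset.mem_range]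
      exact ⟨by omega, by omega⟩
  · rintro ⟨j, k⟩ hp
    simp only [Finset.mem_product, Finset.mem_range] at hp
    by_cases h : j + k + 1 ≤ m
    · simp only [if_pos h, if_pos (show k + j + 1 ≤ m by omega)]
    · simp only [if_neg h]
      rw [if_neg (show ¬ ((k - 1) + (j + 1) + 1 ≤ m) by omega)]
      simp only [Prod.mk.injEq]
      omega
  · rintro ⟨k, j⟩ hp
    simp only [Finset.mem_product, Finset.mem_range] at hp
    by_cases h : k + j + 1 ≤ m
    · simp only [if_pos h, if_pos (show j + k + 1 ≤ m by omega)]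
    · simp only [if_neg h]
      rw [if_neg (show ¬ ((j - 1) + (k + 1) + 1 ≤ m) by omega)]
      simp only [Prod.mk.injEq]
      omega
  · rintro ⟨j, k⟩ hp
    simp only [Finset.mem_product, Finset.mem_range] at hp
    by_cases h : j + k + 1 ≤ m
    · simp only [if_pos h]
      exact commute_descW_ascW T h
    · simp only [if_neg h]
      exact desc_mul_asc T hYBE j k (by omega) (by omega) (by omega) (by omega)
lemma sum_ite_pull {α : Type*} [Fintype α] (c : Prop) [Decidable c] (F : α → ℂ) :
    (∑ w : α, if c then F w else 0) = if c then ∑ w, F w else 0 := by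
  split_ifs <;> simp

lemma sum_pi_succ {n : ℕ} (F : (Fin (n + 1) → ι) → ℂ) :
    ∑ h, F h = ∑ x : ι, ∑ w : Fin n → ι, F (Fin.cons x w) := by
  rw [← Equiv.sum_comp (Fin.consEquiv (fun _ => ι)) F]
  calc ∑ p : ι × (Fin n → ι), F (Fin.consEquiv (fun _ => ι) p)
      = ∑ x : ι, ∑ w : Fin n → ι, F (Fin.consEquiv (fun _ => ι) (x, w)) :=
        Fintype.sum_prod_type _
    _ = _ := by rfl

lemma sum_pi_snoc {n : ℕ} (F : (Fin (n + 1) → ι) → ℂ) :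
    ∑ h, F h = ∑ x : ι, ∑ w : Fin n → ι, F (Fin.snoc w x) := by
  rw [← Equiv.sum_comp (Fin.snocEquiv (fun _ => ι)) F]
  calc ∑ p : ι × (Fin n → ι), F (Fin.snocEquiv (fun _ => ι) p)
      = ∑ x : ι, ∑ w : Fin n → ι, F (Fin.snocEquiv (fun _ => ι) (x, w)) :=
        Fintype.sum_prod_type _
    _ = _ := by rfl

lemma cons_comp_succ {n : ℕ} (x : ι) (w : Fin n → ι) : Fin.cons x w ∘ Fin.succ = w := by
  funext j; simp

lemma snoc_comp_castSucc {n : ℕ} (x : ι) (w : Fin n → ι) :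
    (Fin.snoc w x : Fin (n + 1) → ι) ∘ Fin.castSucc = w := by
  funext j; simp

lemma ampMat_mul {n : ℕ} (A B : Matrix (Fin n → ι) (Fin n → ι) ℂ) :
    ampMat n (A * B) = ampMat n A * ampMat n B := by
  ext g f
  rw [Matrix.mul_apply, sum_pi_succ (fun h => ampMat n A g h * ampMat n B h f)]
  simp only [ampMat, Matrix.of_apply, Fin.cons_zero, cons_comp_succ]
  simp only [ite_mul, zero_mul, mul_ite, mul_zero, sum_ite_pull]
  have : ∀ x : ι, (g 0 = x) = (x = g 0) := fun x => propext ⟨Eq.symm, Eq.symm⟩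
  simp only [this]
  simp only [Finset.sum_ite_eq', Finset.mem_univ, if_true, Matrix.mul_apply]

lemma lastAmpMat_mul {n : ℕ} (A B : Matrix (Fin n → ι) (Fin n → ι) ℂ) :
    lastAmpMat n (A * B) = lastAmpMat n A * lastAmpMat n B := by
  ext g f
  rw [Matrix.mul_apply, sum_pi_snoc (fun h => lastAmpMat n A g h * lastAmpMat n B h f)]
  simp only [lastAmpMat, Matrix.of_apply, Fin.snoc_last, snoc_comp_castSucc]
  simp only [ite_mul, zero_mul, mul_ite, mul_zero, sum_ite_pull]
  have : ∀ x : ι, (g (Fin.last n) = x) = (x = g (Fin.last n)) :=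
    fun x => propext ⟨Eq.symm, Eq.symm⟩
  simp only [this]
  simp only [Finset.sum_ite_eq', Finset.mem_univ, if_true, Matrix.mul_apply]

lemma ampMat_one {n : ℕ} : ampMat (ι := ι) n 1 = 1 := by
  ext g f
  by_cases h : g = f
  · subst h; simp [ampMat, Matrix.one_apply]
  · have h2 : ¬ (g 0 = f 0 ∧ g ∘ Fin.succ = f ∘ Fin.succ) := by
      rintro ⟨h0, hs⟩
      apply h
      funext l
      induction l using Fin.cases with
      | zero => exact h0
      | succ j => exact congrFun hs j
    simp only [ampMat, Matrix.of_apply, Matrix.one_apply, if_neg h]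
    split_ifs with h0 h1
    · exact absurd ⟨h0, h1⟩ h2
    · rfl
    · rfl

lemma lastAmpMat_one {n : ℕ} : lastAmpMat (ι := ι) n 1 = 1 := by
  ext g f
  by_cases h : g = f
  · subst h; simp [lastAmpMat, Matrix.one_apply]
  · have h2 : ¬ (g (Fin.last n) = f (Fin.last n) ∧ g ∘ Fin.castSucc = f ∘ Fin.castSucc) := by
      rintro ⟨h0, hs⟩
      apply h
      funext l
      induction l using Fin.lastCases with
      | last => exact h0
      | cast j => exact congrFun hs j
    simp only [lastAmpMat, Matrix.of_apply, Matrix.one_apply, if_neg h]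
    split_ifs with h0 h1
    · exact absurd ⟨h0, h1⟩ h2
    · rfl
    · rfl
lemma ampMat_sum {n : ℕ} {κ : Type*} (s : Finset κ)
    (P : κ → Matrix (Fin n → ι) (Fin n → ι) ℂ) :
    ampMat n (∑ k ∈ s, P k) = ∑ k ∈ s, ampMat n (P k) := by
  ext g f
  simp only [ampMat, Matrix.of_apply, Matrix.sum_apply]
  split_ifs with h
  · rfl
  · simp

lemma lastAmpMat_sum {n : ℕ} {κ : Type*} (s : Finset κ)
    (P : κ → Matrix (Fin n → ι) (Fin n → ι) ℂ) :
    lastAmpMat n (∑ k ∈ s, P k) = ∑ k ∈ s, lastAmpMat n (P k) := by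
  ext g f
  simp only [lastAmpMat, Matrix.of_apply, Matrix.sum_apply]
  split_ifs with h
  · rfl
  · simp

lemma ampMat_twistLeg {n k : ℕ} (h1 : 1 ≤ k) (h2 : k < n) :
    ampMat n (twistLeg T n k) = twistLeg T (n + 1) (k + 1) := by
  ext g f
  have hk1 : k < n + 1 := by omega
  have hk2 : k + 1 < n + 1 := by omega
  simp only [ampMat, Matrix.of_apply]
  rw [twistLeg_apply_valid T h1 h2, twistLeg_apply_valid T (by omega) hk2]
  have hs1 : ((⟨k - 1, by omega⟩ : Fin n).succ : Fin (n + 1)) = ⟨k, hk1⟩ := by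
    simp [Fin.ext_iff]; omega
  have hs2 : ((⟨k, h2⟩ : Fin n).succ : Fin (n + 1)) = ⟨k + 1, hk2⟩ := by
    simp [Fin.ext_iff]
  have hidx : (⟨k + 1 - 1, by omega⟩ : Fin (n + 1)) = ⟨k, hk1⟩ := by
    simp [Fin.ext_iff]
  have hval1 : (g ∘ Fin.succ) ⟨k - 1, by omega⟩ = g ⟨k, hk1⟩ := by
    simp only [Function.comp_apply, hs1]
  have hval2 : (g ∘ Fin.succ) ⟨k, h2⟩ = g ⟨k + 1, hk2⟩ := by
    simp only [Function.comp_apply, hs2]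
  have hval1' : (f ∘ Fin.succ) ⟨k - 1, by omega⟩ = f ⟨k, hk1⟩ := by
    simp only [Function.comp_apply, hs1]
  have hval2' : (f ∘ Fin.succ) ⟨k, h2⟩ = f ⟨k + 1, hk2⟩ := by
    simp only [Function.comp_apply, hs2]
  have hiff : (g 0 = f 0 ∧ (∀ j : Fin n, j ≠ ⟨k - 1, by omega⟩ → j ≠ ⟨k, h2⟩ →
      (g ∘ Fin.succ) j = (f ∘ Fin.succ) j)) ↔
      (∀ l : Fin (n + 1), l ≠ ⟨k + 1 - 1, by omega⟩ → l ≠ ⟨k + 1, hk2⟩ → g l = f l) := by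
    constructor
    · rintro ⟨h0, hc⟩ l hl1 hl2
      induction l using Fin.cases with
      | zero => exact h0
      | succ j =>
        apply hc j
        · intro hj; apply hl1; rw [hj, hidx, ← hs1]
        · intro hj; apply hl2; rw [hj, ← hs2]
    · intro hc
      constructor
      · exact hc 0 (fun hh => by simp [Fin.ext_iff] at hh; omega)
          (fun hh => by simp [Fin.ext_iff] at hh)
      · intro j hj1 hj2
        apply hc j.succ
        · rw [hidx]
          intro hj; apply hj1
          rcases j with ⟨jv, hjv⟩
          simp only [Fin.ext_iff, Fin.val_succ] at hj ⊢
          omega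
        · intro hj; apply hj2
          rcases j with ⟨jv, hjv⟩
          simp only [Fin.ext_iff, Fin.val_succ] at hj ⊢
          omega
  rw [hidx] at hiff ⊢
  split_ifs with h0 hC hC2 hC2' hC2''
  · rw [hval1, hval2, hval1', hval2']
  · exact absurd (hiff.1 ⟨h0, hC⟩) hC2
  · exact absurd (hiff.2 hC2').2 hC
  · rfl
  · exact absurd (hiff.2 hC2'').1 h0
  · rfl
lemma lastAmpMat_twistLeg {n k : ℕ} (h1 : 1 ≤ k) (h2 : k < n) :
    lastAmpMat n (twistLeg T n k) = twistLeg T (n + 1) k := by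
  ext g f
  have hk1 : k - 1 < n + 1 := by omega
  have hk2 : k < n + 1 := by omega
  simp only [lastAmpMat, Matrix.of_apply]
  rw [twistLeg_apply_valid T h1 h2, twistLeg_apply_valid T h1 hk2]
  have hs1 : ((⟨k - 1, by omega⟩ : Fin n).castSucc : Fin (n + 1)) = ⟨k - 1, hk1⟩ := by
    simp [Fin.ext_iff]
  have hs2 : ((⟨k, h2⟩ : Fin n).castSucc : Fin (n + 1)) = ⟨k, hk2⟩ := by
    simp [Fin.ext_iff]
  have hval1 : (g ∘ Fin.castSucc) ⟨k - 1, by omega⟩ = g ⟨k - 1, hk1⟩ := by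
    simp only [Function.comp_apply, hs1]
  have hval2 : (g ∘ Fin.castSucc) ⟨k, h2⟩ = g ⟨k, hk2⟩ := by
    simp only [Function.comp_apply, hs2]
  have hval1' : (f ∘ Fin.castSucc) ⟨k - 1, by omega⟩ = f ⟨k - 1, hk1⟩ := by
    simp only [Function.comp_apply, hs1]
  have hval2' : (f ∘ Fin.castSucc) ⟨k, h2⟩ = f ⟨k, hk2⟩ := by
    simp only [Function.comp_apply, hs2]
  have hiff : (g (Fin.last n) = f (Fin.last n) ∧ (∀ j : Fin n, j ≠ ⟨k - 1, by omega⟩ →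
      j ≠ ⟨k, h2⟩ → (g ∘ Fin.castSucc) j = (f ∘ Fin.castSucc) j)) ↔
      (∀ l : Fin (n + 1), l ≠ ⟨k - 1, hk1⟩ → l ≠ ⟨k, hk2⟩ → g l = f l) := by
    constructor
    · rintro ⟨h0, hc⟩ l hl1 hl2
      induction l using Fin.lastCases with
      | last => exact h0
      | cast j =>
        apply hc j
        · intro hj; apply hl1; rw [hj, ← hs1]
        · intro hj; apply hl2; rw [hj, ← hs2]
    · intro hc
      constructor
      · exact hc (Fin.last n)
          (fun hh => by simp [Fin.ext_iff] at hh; omega)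
          (fun hh => by simp [Fin.ext_iff] at hh; omega)
      · intro j hj1 hj2
        apply hc j.castSucc
        · intro hj; apply hj1
          rcases j with ⟨jv, hjv⟩
          simp only [Fin.ext_iff, Fin.coe_castSucc] at hj ⊢
          omega
        · intro hj; apply hj2
          rcases j with ⟨jv, hjv⟩
          simp only [Fin.ext_iff, Fin.coe_castSucc] at hj ⊢
          omega
  split_ifs with h0 hC hC2 hC2' hC2''
  · rw [hval1, hval2, hval1', hval2']
  · exact absurd (hiff.1 ⟨h0, hC⟩) hC2
  · exact absurd (hiff.2 hC2').2 hC
  · rfl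
  · exact absurd (hiff.2 hC2'').1 h0
  · rfl

lemma ampMat_lastAmpMat {n : ℕ} (Q : Matrix (Fin n → ι) (Fin n → ι) ℂ) :
    ampMat (n + 1) (lastAmpMat n Q) = lastAmpMat (n + 1) (ampMat n Q) := by
  ext g f
  simp only [ampMat, lastAmpMat, Matrix.of_apply]
  have e1 : ∀ h : Fin (n + 2) → ι, (h ∘ Fin.succ) (Fin.last n) = h (Fin.last (n + 1)) :=
    fun h => congrArg h (by simp [Fin.ext_iff])
  have e2 : ∀ h : Fin (n + 2) → ι, (h ∘ Fin.castSucc) 0 = h 0 :=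
    fun h => congrArg h (by simp [Fin.ext_iff])
  have e3 : ∀ h : Fin (n + 2) → ι,
      (h ∘ Fin.succ) ∘ Fin.castSucc = (h ∘ Fin.castSucc) ∘ Fin.succ :=
    fun h => funext fun j => congrArg h (by simp [Fin.ext_iff])
  rw [e1 g, e1 f, e2 g, e2 f, e3 g, e3 f]
  by_cases h0 : g 0 = f 0 <;> by_cases hl : g (Fin.last (n + 1)) = f (Fin.last (n + 1)) <;>
    simp [h0, hl]
lemma ampMat_descW {n : ℕ} : ∀ k : ℕ, k ≤ n →
    ampMat (n + 1) (descW T (n + 1) n k) = descW T (n + 2) (n + 1) k := by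
  intro k
  induction k with
  | zero => intro _; rw [descW_zero, descW_zero, ampMat_one]
  | succ k ih =>
    intro hk
    rw [descW_succ, descW_succ, ampMat_mul, ih (by omega),
      ampMat_twistLeg T (show 1 ≤ n - k by omega) (show n - k < n + 1 by omega),
      show n - k + 1 = n + 1 - k from by omega]

lemma lastAmpMat_ascW {n : ℕ} : ∀ k : ℕ, k ≤ n →
    lastAmpMat (n + 1) (ascW T (n + 1) k) = ascW T (n + 2) k := by
  intro k
  induction k with
  | zero => intro _; rw [ascW_zero, ascW_zero, lastAmpMat_one]
  | succ k ih =>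
    intro hk
    rw [ascW_succ, ascW_succ, lastAmpMat_mul, ih (by omega),
      lastAmpMat_twistLeg T (by omega) (show k + 1 < n + 1 by omega)]

end TwistAux

/-- if `T` satisfies the Yang–Baxter equation, then the twisted symmetrizers
defined by the left recursion also satisfy the right recursion
`P_{T,n+1} = F_n(P_{T,n}) * (1 + T_n + T_n T_{n-1} + ⋯ + T_n ⋯ T_1)`. -/
theorem twistedSymmetrizer_right_recursion
    {ι : Type*} [Fintype ι] [DecidableEq ι] [Nonempty ι]
    (T : Matrix (ι × ι) (ι × ι) ℂ)
    (hYBE : twistLeg T 3 1 * twistLeg T 3 2 * twistLeg T 3 1 =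
      twistLeg T 3 2 * twistLeg T 3 1 * twistLeg T 3 2) :
    ∀ n : ℕ, twistedSymmetrizer T (n + 1) =
      lastAmpMat n (twistedSymmetrizer T n) *
        ∑ k ∈ Finset.range (n + 1),
          ((List.range k).map (fun j => twistLeg T (n + 1) (n - j))).prod := by
  intro n
  induction n with
  | zero =>
    show ampMat 0 (twistedSymmetrizer T 0) * _ = _
    rw [show twistedSymmetrizer T 0 = 1 from rfl, ampMat_one, lastAmpMat_one]
    simp
  | succ n ih =>
    have hP2 : twistedSymmetrizer T (n + 2) =
        ampMat (n + 1) (twistedSymmetrizer T (n + 1)) *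
          ∑ k ∈ Finset.range (n + 2), ascW T (n + 2) k := rfl
    have hP1 : twistedSymmetrizer T (n + 1) =
        ampMat n (twistedSymmetrizer T n) *
          ∑ k ∈ Finset.range (n + 1), ascW T (n + 1) k := rfl
    have hgoalR : (∑ k ∈ Finset.range (n + 1 + 1),
        ((List.range k).map (fun j => twistLeg T (n + 1 + 1) (n + 1 - j))).prod)
        = ∑ k ∈ Finset.range (n + 2), descW T (n + 2) (n + 1) k := rfl
    have hihR : (∑ k ∈ Finset.range (n + 1),
        ((List.range k).map (fun j => twistLeg T (n + 1) (n - j))).prod)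
        = ∑ k ∈ Finset.range (n + 1), descW T (n + 1) n k := rfl
    rw [hihR] at ih
    rw [hgoalR]
    conv_lhs => rw [hP2, ih]
    conv_rhs => rw [hP1]
    rw [ampMat_mul, lastAmpMat_mul, ampMat_lastAmpMat, ampMat_sum, lastAmpMat_sum]
    rw [Finset.sum_congr rfl (fun k hk =>
      ampMat_descW T k (by simpa using Nat.lt_succ_iff.mp (Finset.mem_range.mp hk)))]
    rw [Finset.sum_congr rfl (fun k hk =>
      lastAmpMat_ascW T k (Nat.lt_succ_iff.mp (Finset.mem_range.mp hk)))]
    rw [mul_assoc, mul_assoc, key_identity T hYBE (by omega)]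
end
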